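/- arXiv:1109.4009 — 9 statements merged into one kernel-verified Lean document; each statement's English description precedes it below -/
import Mathlib

section
/- Let N ≥ 2. There exists a constant C > 0, depending only on N, such that for every function u : [0,1] → ℝ that is continuous on [0,1], differentiable on (0,1), nonnegative, and nondecreasing, one has sup_{r ∈ [0,1]} u(r) ≤ C · ∫₀¹ (u(r) + u'(r)) r^{N−1} dr. -/
open Set MeasureTheory

lemma aux_deriv_nonneg {u : ℝ → ℝ} (hmono : MonotoneOn u (Icc 0 1))
    {x : ℝ} (hx : x ∈ Ioo (0:ℝ) 1) (hd : DifferentiableAt ℝ u x) : 0 ≤ deriv u x := by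
  have hder := hd.hasDerivAt
  rw [hasDerivAt_iff_tendsto_slope] at hder
  have h1 : Filter.Tendsto (slope u x) (nhdsWithin x (Ioi x)) (nhds (deriv u x)) :=
    hder.mono_left (nhdsWithin_mono x (fun y hy => ne_of_gt hy))
  refine ge_of_tendsto h1 ?_
  filter_upwards [Ioo_mem_nhdsGT hx.2] with y hy
  rw [slope_def_field]
  have hxm : x ∈ Icc (0:ℝ) 1 := ⟨hx.1.le, hx.2.le⟩
  have hym : y ∈ Icc (0:ℝ) 1 := ⟨(hx.1.trans hy.1).le, hy.2.le⟩
  have := hmono hxm hym hy.1.le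
  have hyx : (0:ℝ) < y - x := by linarith [hy.1]
  exact div_nonneg (by linarith) hyx.le

/-- Embedding of the cone of nonnegative nondecreasing radial functions into `L^∞`:
`‖u‖_{L^∞(B)} ≤ C ‖u‖_{W^{1,1}(B)}`, written in radial coordinates with the weight
`r^{N-1}`, for a constant `C` depending only on the dimension `N`. -/
theorem stmt_3 (N : ℕ) (hN : 2 ≤ N) :
    ∃ C > (0:ℝ), ∀ u : ℝ → ℝ,
      ContinuousOn u (Icc 0 1) →
      (∀ r ∈ Ioo (0:ℝ) 1, DifferentiableAt ℝ u r) →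
      (∀ r ∈ Icc (0:ℝ) 1, 0 ≤ u r) →
      MonotoneOn u (Icc 0 1) →
      ∀ r ∈ Icc (0:ℝ) 1,
        ENNReal.ofReal (u r) ≤
          ENNReal.ofReal C *
            ∫⁻ t in Ioo (0:ℝ) 1,
              ENNReal.ofReal ((u t + deriv u t) * t ^ (N - 1)) := by
  refine ⟨2 ^ (N + 1), by positivity, fun u hcont hdiff hnn hmono r hr => ?_⟩
  set g : ℝ → ℝ := fun t => (u t + deriv u t) * t ^ (N - 1) with hg
  set I : ENNReal := ∫⁻ t in Ioo (0:ℝ) 1, ENNReal.ofReal (g t) with hI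
  have hC0 : (0:ℝ) < 2 ^ (N + 1) := by positivity
  -- trivial if I = ∞
  rcases eq_or_ne I ⊤ with hItop | hIfin
  · rw [hItop, ENNReal.mul_top (fun h => (not_le.2 hC0) (ENNReal.ofReal_eq_zero.1 h))]
    exact le_top
  -- key pointwise facts on (1/2, 1)
  have hq : (2:ℝ) ^ (N - 1) * (1/2 : ℝ) ^ (N - 1) = 1 := by
    rw [← mul_pow]; norm_num
  have hq0 : (0:ℝ) ≤ (2:ℝ) ^ (N - 1) := by positivity
  have key : ∀ t ∈ Ioo (1/2 : ℝ) 1,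
      deriv u t ≤ 2 ^ (N - 1) * g t ∧ u (1/2) ≤ 2 ^ (N - 1) * g t := by
    intro t ht
    have ht01 : t ∈ Ioo (0:ℝ) 1 := ⟨by linarith [ht.1], ht.2⟩
    have htm : t ∈ Icc (0:ℝ) 1 := ⟨ht01.1.le, ht01.2.le⟩
    have hu0 : 0 ≤ u t := hnn t htm
    have hd0 : 0 ≤ deriv u t := aux_deriv_nonneg hmono ht01 (hdiff t ht01)
    have hp : (1/2 : ℝ) ^ (N - 1) ≤ t ^ (N - 1) :=
      pow_le_pow_left₀ (by norm_num) ht.1.le _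
    have hqp : (1:ℝ) ≤ 2 ^ (N - 1) * t ^ (N - 1) := by nlinarith
    have huh : u (1/2) ≤ u t := hmono (by norm_num) htm ht.1.le
    have hge : u t + deriv u t ≤ 2 ^ (N - 1) * g t := by
      rw [hg]
      calc u t + deriv u t = (u t + deriv u t) * 1 := by ring
        _ ≤ (u t + deriv u t) * (2 ^ (N - 1) * t ^ (N - 1)) := by
            apply mul_le_mul_of_nonneg_left hqp (by linarith)
        _ = 2 ^ (N - 1) * ((u t + deriv u t) * t ^ (N - 1)) := by ring
    constructor
    · linarith
    · linarith
  set K : ENNReal := ∫⁻ t in Ioo (1/2 : ℝ) 1, ENNReal.ofReal (g t) with hK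
  have hKI : K ≤ I := lintegral_mono_set (fun t ht => ⟨by linarith [ht.1], ht.2⟩)
  have hKfin : K ≠ ⊤ := fun h => hIfin (top_le_iff.1 (h ▸ hKI))
  -- bound the lintegral of deriv u on (1/2,1)
  have hlint_deriv : ∫⁻ t in Ioo (1/2 : ℝ) 1, ENNReal.ofReal (deriv u t)
      ≤ ENNReal.ofReal (2 ^ (N - 1)) * K := by
    rw [hK, ← lintegral_const_mul' _ _ ENNReal.ofReal_ne_top]
    refine lintegral_mono_ae (((ae_restrict_iff' measurableSet_Ioo).2
      (Filter.Eventually.of_forall fun t ht => ?_)))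
    rw [← ENNReal.ofReal_mul hq0]
    exact ENNReal.ofReal_le_ofReal (key t ht).1
  have hderiv_fin : ∫⁻ t in Ioo (1/2 : ℝ) 1, ENNReal.ofReal (deriv u t) ≠ ⊤ :=
    (lt_of_le_of_lt hlint_deriv
      (ENNReal.mul_lt_top ENNReal.ofReal_lt_top hKfin.lt_top)).ne
  -- derivative is integrable on (1/2,1)
  have hmeas : Measurable (deriv u) := measurable_deriv u
  have hd_nn : ∀ t ∈ Ioo (1/2 : ℝ) 1, 0 ≤ deriv u t := fun t ht =>
    aux_deriv_nonneg hmono ⟨by linarith [ht.1], ht.2⟩ (hdiff t ⟨by linarith [ht.1], ht.2⟩)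
  have hint : IntegrableOn (deriv u) (Ioo (1/2 : ℝ) 1) := by
    refine ⟨hmeas.aestronglyMeasurable.restrict, ?_⟩
    rw [hasFiniteIntegral_iff_ofReal
      ((ae_restrict_iff' measurableSet_Ioo).2 (Filter.Eventually.of_forall hd_nn))]
    exact lt_top_iff_ne_top.2 hderiv_fin
  -- FTC
  have hFTC : ∫ y in (1/2 : ℝ)..1, deriv u y = u 1 - u (1/2) := by
    apply intervalIntegral.integral_eq_sub_of_hasDeriv_right_of_le (by norm_num)
      (hcont.mono (fun x hx => ⟨by linarith [hx.1], hx.2⟩))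
      (fun x hx => ((hdiff x ⟨by linarith [hx.1], hx.2⟩).hasDerivAt).hasDerivWithinAt)
    rw [intervalIntegrable_iff_integrableOn_Ioo_of_le (by norm_num)]
    exact hint
  -- bound ofReal of the Bochner integral of deriv u
  have hintIoc : ∫ y in (1/2 : ℝ)..1, deriv u y = ∫ t in Ioo (1/2 : ℝ) 1, deriv u t := by
    rw [intervalIntegral.integral_of_le (by norm_num)]
    exact setIntegral_congr_set Ioo_ae_eq_Ioc.symm
  have hbound1 : ENNReal.ofReal (∫ y in (1/2 : ℝ)..1, deriv u y)
      ≤ ENNReal.ofReal (2 ^ (N - 1)) * K := by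
    rw [hintIoc, ofReal_integral_eq_lintegral_ofReal hint
      ((ae_restrict_iff' measurableSet_Ioo).2 (Filter.Eventually.of_forall hd_nn))]
    exact hlint_deriv
  -- bound ofReal (u (1/2))
  have hbound2 : ENNReal.ofReal (u (1/2)) ≤ ENNReal.ofReal (2 ^ N) * K := by
    have hconst : ENNReal.ofReal (u (1/2)) * ENNReal.ofReal (1/2)
        ≤ ENNReal.ofReal (2 ^ (N - 1)) * K := by
      have : ∫⁻ _ in Ioo (1/2 : ℝ) 1, ENNReal.ofReal (u (1/2))
          = ENNReal.ofReal (u (1/2)) * ENNReal.ofReal (1/2) := by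
        rw [setLIntegral_const, Real.volume_Ioo]; norm_num
      rw [← this, hK, ← lintegral_const_mul' _ _ ENNReal.ofReal_ne_top]
      refine lintegral_mono_ae (((ae_restrict_iff' measurableSet_Ioo).2
        (Filter.Eventually.of_forall fun t ht => ?_)))
      rw [← ENNReal.ofReal_mul hq0]
      exact ENNReal.ofReal_le_ofReal (key t ht).2
    have h2 : ENNReal.ofReal (1/2 : ℝ) * ENNReal.ofReal (2 : ℝ) = 1 := by
      rw [← ENNReal.ofReal_mul (by norm_num)]; norm_num
    calc ENNReal.ofReal (u (1/2))
        = ENNReal.ofReal (u (1/2)) * (ENNReal.ofReal (1/2) * ENNReal.ofReal 2) := by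
          rw [h2, mul_one]
      _ = ENNReal.ofReal (u (1/2)) * ENNReal.ofReal (1/2) * ENNReal.ofReal 2 := by ring
      _ ≤ ENNReal.ofReal (2 ^ (N - 1)) * K * ENNReal.ofReal 2 :=
          mul_le_mul_left hconst _
      _ = ENNReal.ofReal (2 : ℝ) * ENNReal.ofReal (2 ^ (N - 1)) * K := by ring
      _ = ENNReal.ofReal (2 ^ N) * K := by
          rw [← ENNReal.ofReal_mul (by norm_num)]
          congr 1
          have h2N : (2:ℝ) ^ N = 2 ^ (N - 1) * 2 := by
            rw [← pow_succ]; congr 1; omega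
          rw [h2N]; ring
  -- combine
  have hur : u r ≤ u 1 := hmono hr (by norm_num) hr.2
  have hu1 : u 1 = u (1/2) + ∫ y in (1/2 : ℝ)..1, deriv u y := by
    rw [hFTC]; ring
  calc ENNReal.ofReal (u r) ≤ ENNReal.ofReal (u 1) := ENNReal.ofReal_le_ofReal hur
    _ = ENNReal.ofReal (u (1/2) + ∫ y in (1/2 : ℝ)..1, deriv u y) := by rw [← hu1]
    _ ≤ ENNReal.ofReal (u (1/2)) + ENNReal.ofReal (∫ y in (1/2 : ℝ)..1, deriv u y) :=
        ENNReal.ofReal_add_le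
    _ ≤ ENNReal.ofReal (2 ^ N) * K + ENNReal.ofReal (2 ^ (N - 1)) * K :=
        add_le_add hbound2 hbound1
    _ = (ENNReal.ofReal (2 ^ N) + ENNReal.ofReal (2 ^ (N - 1))) * K := by ring
    _ ≤ ENNReal.ofReal (2 ^ (N + 1)) * K := by
        apply mul_le_mul_left
        rw [← ENNReal.ofReal_add (by positivity) (by positivity)]
        apply ENNReal.ofReal_le_ofReal
        have h1 : (2:ℝ) ^ (N - 1) ≤ 2 ^ N := by
          apply pow_le_pow_right₀ (by norm_num); omega
        have h2 : (2:ℝ) ^ (N + 1) = 2 ^ N + 2 ^ N := by ring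
        linarith
    _ ≤ ENNReal.ofReal (2 ^ (N + 1)) * I := mul_le_mul_right hKI _
end

section
/- Let N ≥ 3. For each positive integer n define u_n : (0,1] → ℝ by u_n(r) = r^{1/n}. Then: (i) lim_{n→∞} [ ∫₀¹ ((1/n)·r^{1/n − 1})² r^{N−1} dr + ∫₀¹ (r^{1/n} − 1)² r^{N−1} dr ] = 0; and (ii) for every n, sup_{r ∈ (0,1)} |r^{1/n} − 1| = 1. In particular, u_n converges to the constant function 1 in the H¹-norm on the unit ball of ℝ^N while ‖u_n − 1‖_{L^∞} ≥ 1 for all n. -/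
open Set Filter

private lemma int1 (x : ℝ) (hx : 0 < x) (c : ℕ) (hc : 2 ≤ c) :
    ∫ r in (0:ℝ)..1, (x * r ^ (x - 1)) ^ 2 * r ^ c = x ^ 2 / (2 * x + c - 1) := by
  have hcR : (2:ℝ) ≤ c := by exact_mod_cast hc
  have hcongr : EqOn (fun r : ℝ => (x * r ^ (x - 1)) ^ 2 * r ^ c)
      (fun r : ℝ => x ^ 2 * r ^ (2 * x - 2 + c)) (uIcc (0:ℝ) 1) := by
    intro r hr
    rw [uIcc_of_le zero_le_one] at hr
    rcases eq_or_lt_of_le hr.1 with h0 | h0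
    · simp only [← h0]
      rw [Real.zero_rpow (by linarith : 2 * x - 2 + (c:ℝ) ≠ 0)]
      simp [zero_pow (by omega : c ≠ 0)]
    · have h2 : (r ^ (x - 1)) ^ 2 = r ^ (2 * x - 2) := by
        rw [← Real.rpow_natCast (r ^ (x - 1)) 2, ← Real.rpow_mul h0.le]
        congr 1; push_cast; ring
      calc (x * r ^ (x - 1)) ^ 2 * r ^ c
          = x ^ 2 * ((r ^ (x - 1)) ^ 2 * r ^ ((c:ℕ):ℝ)) := by
            rw [Real.rpow_natCast]; ring
        _ = x ^ 2 * r ^ (2 * x - 2 + c) := by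
            rw [h2, ← Real.rpow_add h0]
  rw [intervalIntegral.integral_congr hcongr, intervalIntegral.integral_const_mul,
    integral_rpow (Or.inl (by linarith)), Real.one_rpow,
    Real.zero_rpow (by linarith : 2 * x - 2 + (c:ℝ) + 1 ≠ 0), sub_zero, mul_one_div]
  congr 1; ring

private lemma int2 (x : ℝ) (hx : 0 < x) (c : ℕ) (hc : 2 ≤ c) :
    ∫ r in (0:ℝ)..1, (r ^ x - 1) ^ 2 * r ^ c
      = 1 / (2 * x + c + 1) - 2 / (x + c + 1) + 1 / (c + 1) := by
  have hcR : (2:ℝ) ≤ c := by exact_mod_cast hc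
  have hcongr : EqOn (fun r : ℝ => (r ^ x - 1) ^ 2 * r ^ c)
      (fun r : ℝ => r ^ (2 * x + c) - 2 * r ^ (x + c) + r ^ ((c:ℕ):ℝ)) (uIcc (0:ℝ) 1) := by
    intro r hr
    rw [uIcc_of_le zero_le_one] at hr
    rcases eq_or_lt_of_le hr.1 with h0 | h0
    · simp only [← h0]
      rw [Real.zero_rpow (by linarith : 2 * x + (c:ℝ) ≠ 0),
        Real.zero_rpow (by linarith : x + (c:ℝ) ≠ 0),
        Real.zero_rpow (by linarith : ((c:ℕ):ℝ) ≠ 0),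
        Real.zero_rpow hx.ne']
      simp [zero_pow (by omega : c ≠ 0)]
    · have e1 : r ^ (2 * x + (c:ℝ)) = r ^ x * r ^ x * r ^ ((c:ℕ):ℝ) := by
        rw [show 2 * x + (c:ℝ) = x + (x + c) by ring, Real.rpow_add h0, Real.rpow_add h0]
        ring
      have e2 : r ^ (x + (c:ℝ)) = r ^ x * r ^ ((c:ℕ):ℝ) := Real.rpow_add h0 x c
      calc (r ^ x - 1) ^ 2 * r ^ c
          = r ^ x * r ^ x * r ^ ((c:ℕ):ℝ) - 2 * (r ^ x * r ^ ((c:ℕ):ℝ)) + r ^ ((c:ℕ):ℝ) := by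
            rw [Real.rpow_natCast]; ring
        _ = r ^ (2 * x + (c:ℝ)) - 2 * r ^ (x + (c:ℝ)) + r ^ ((c:ℕ):ℝ) := by rw [e1, e2]
  have i1 : IntervalIntegrable (fun r : ℝ => r ^ (2 * x + (c:ℝ))) MeasureTheory.volume 0 1 :=
    intervalIntegral.intervalIntegrable_rpow' (by linarith)
  have i2 : IntervalIntegrable (fun r : ℝ => 2 * r ^ (x + (c:ℝ))) MeasureTheory.volume 0 1 :=
    (intervalIntegral.intervalIntegrable_rpow' (by linarith)).const_mul 2
  have i3 : IntervalIntegrable (fun r : ℝ => r ^ ((c:ℕ):ℝ)) MeasureTheory.volume 0 1 :=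
    intervalIntegral.intervalIntegrable_rpow' (by linarith)
  rw [intervalIntegral.integral_congr hcongr, intervalIntegral.integral_add (i1.sub i2) i3,
    intervalIntegral.integral_sub i1 i2, intervalIntegral.integral_const_mul,
    integral_rpow (Or.inl (by linarith : (-1:ℝ) < 2 * x + c)),
    integral_rpow (Or.inl (by linarith : (-1:ℝ) < x + c)),
    integral_rpow (Or.inl (by linarith : (-1:ℝ) < ((c:ℕ):ℝ))),
    Real.one_rpow, Real.one_rpow, Real.one_rpow,
    Real.zero_rpow (by linarith : 2 * x + (c:ℝ) + 1 ≠ 0),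
    Real.zero_rpow (by linarith : x + (c:ℝ) + 1 ≠ 0),
    Real.zero_rpow (by linarith : ((c:ℕ):ℝ) + 1 ≠ 0)]
  rw [sub_zero, mul_one_div]

/-- The sequence `u_n(r) = r^{1/n}` converges in `H¹` of the unit ball of `ℝ^N`
(`N ≥ 3`) to the constant function `1`, while `‖u_n - 1‖_{L^∞} = 1` for all `n`:
the embedding of the cone into `L^∞` is not continuous. -/
theorem stmt_4 (N : ℕ) (hN : 3 ≤ N) :
    Filter.Tendsto
      (fun n : ℕ =>
        (∫ r in (0:ℝ)..1, ((1 / (n : ℝ)) * r ^ ((1:ℝ)/n - 1)) ^ 2 * r ^ (N - 1)) +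
        ∫ r in (0:ℝ)..1, (r ^ ((1:ℝ)/n) - 1) ^ 2 * r ^ (N - 1))
      Filter.atTop (nhds 0) ∧
    ∀ n : ℕ, 1 ≤ n →
      sSup ((fun r : ℝ => |r ^ ((1:ℝ)/n) - 1|) '' Ioo 0 1) = 1 := by
  have hC3 : (3:ℝ) ≤ (N:ℝ) := by exact_mod_cast hN
  set C : ℝ := (N:ℝ) with hC
  have hcN : ((N - 1 : ℕ) : ℝ) = C - 1 := by
    rw [Nat.cast_sub (by omega)]; norm_num; exact hC.symm
  constructor
  · set f : ℝ → ℝ := fun y => y ^ 2 / (2 * y + C - 2) +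
      (1 / (2 * y + C) - 2 / (y + C) + 1 / C) with hf
    have hcont : ContinuousAt f 0 := by
      apply ContinuousAt.add
      · exact ContinuousAt.div (by fun_prop) (by fun_prop) (by norm_num; linarith)
      · apply ContinuousAt.add
        · apply ContinuousAt.sub
          · exact ContinuousAt.div (by fun_prop) (by fun_prop) (by norm_num; linarith)
          · exact ContinuousAt.div (by fun_prop) (by fun_prop) (by norm_num; linarith)
        · exact continuousAt_const
    have hf0 : f 0 = 0 := by
      simp only [hf]
      have hC0 : C ≠ 0 := by linarith
      field_simp
      ring
    have hten : Tendsto (fun n : ℕ => f (1 / n)) atTop (nhds 0) := by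
      rw [← hf0]
      exact hcont.tendsto.comp tendsto_one_div_atTop_nhds_zero_nat
    apply Tendsto.congr' _ hten
    filter_upwards [eventually_ge_atTop 1] with n hn
    have hnR : (0:ℝ) < (n:ℝ) := by exact_mod_cast Nat.lt_of_lt_of_le Nat.zero_lt_one hn
    have hx : (0:ℝ) < 1 / n := by positivity
    rw [hf, int1 (1/(n:ℝ)) hx (N-1) (by omega), int2 (1/(n:ℝ)) hx (N-1) (by omega), hcN]
    ring_nf
  · intro n hn
    have hnR : (0:ℝ) < (n:ℝ) := by exact_mod_cast Nat.lt_of_lt_of_le Nat.zero_lt_one hn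
    have hx : (0:ℝ) < 1 / n := by positivity
    apply csSup_eq_of_forall_le_of_forall_lt_exists_gt
    · exact ⟨_, ⟨1/2, by norm_num, rfl⟩⟩
    · rintro a ⟨r, hr, rfl⟩
      have h1 : r ^ ((1:ℝ)/n) ≤ 1 := Real.rpow_le_one hr.1.le hr.2.le hx.le
      have h0 : 0 ≤ r ^ ((1:ℝ)/n) := Real.rpow_nonneg hr.1.le _
      simp only
      rw [abs_of_nonpos (by linarith)]; linarith
    · intro w hw
      rcases lt_or_ge w 0 with h | h
      · exact ⟨_, ⟨1/2, by norm_num, rfl⟩, lt_of_lt_of_le h (abs_nonneg _)⟩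
      · have h1w : 0 < 1 - w := by linarith
        set r : ℝ := min ((1 - w) ^ n) 1 / 2 with hrdef
        have hpos : 0 < (1 - w) ^ n := pow_pos h1w n
        have hr0 : 0 < r := by positivity
        have hr1 : r < 1 := by
          have := min_le_right ((1 - w) ^ n) 1
          rw [hrdef]; linarith
        refine ⟨_, ⟨r, ⟨hr0, hr1⟩, rfl⟩, ?_⟩
        have hlt : r < (1 - w) ^ n := by
          have := min_le_left ((1 - w) ^ n) 1
          rw [hrdef]; linarith
        have hrx : r ^ ((1:ℝ)/n) < 1 - w := by
          calc r ^ ((1:ℝ)/n) < ((1 - w) ^ n) ^ ((1:ℝ)/n) :=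
                Real.rpow_lt_rpow hr0.le hlt hx
            _ = 1 - w := by
                rw [← Real.rpow_natCast (1 - w) n, ← Real.rpow_mul h1w.le,
                  mul_one_div, div_self hnR.ne', Real.rpow_one]
        have hle : r ^ ((1:ℝ)/n) ≤ 1 := Real.rpow_le_one hr0.le hr1.le hx.le
        simp only
        rw [abs_of_nonpos (by linarith)]
        linarith
end

section
/- Let N ≥ 2. Let b : [0,1] → ℝ be continuous and nonpositive, such that r ↦ r·b(r) is continuously differentiable on (0,1) with (d/dr)(b(r)·r) > −1 − (N−1)/r² for all r ∈ (0,1). Let w : [0,1] → ℝ be continuous on [0,1], differentiable on (0,1) with w'(r) ≥ 0 for all r ∈ (0,1). Let v : [0,1] → ℝ be continuous on [0,1], with v' continuous on [0,1], v three times differentiable on (0,1), satisfying v'(0) = v'(1) = 0 and −v''(r) + (b(r)·r − (N−1)/r)·v'(r) + v(r) = w(r) for all r ∈ (0,1). Then v'(r) ≥ 0 for all r ∈ [0,1], i.e. v is nondecreasing. -/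
open Set

/-- The solution operator of the radial linear Neumann problem
`-v'' + (b(r)r - (N-1)/r) v' + v = w`, `v'(0) = v'(1) = 0`, maps nondecreasing data
to nondecreasing solutions: if `w' ≥ 0` on `(0,1)` then `v' ≥ 0` on `[0,1]`. -/
theorem stmt_5 (N : ℕ) (hN : 2 ≤ N) (b w : ℝ → ℝ)
    (hb_cont : ContinuousOn b (Icc 0 1))
    (hb_nonpos : ∀ r ∈ Icc (0:ℝ) 1, b r ≤ 0)
    (hrb_diff : ∀ r ∈ Ioo (0:ℝ) 1, DifferentiableAt ℝ (fun t => b t * t) r)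
    (hrb_cont : ContinuousOn (deriv (fun t => b t * t)) (Ioo 0 1))
    (hrb : ∀ r ∈ Ioo (0:ℝ) 1,
      -1 - ((N : ℝ) - 1) / r ^ 2 < deriv (fun t => b t * t) r)
    (hw_cont : ContinuousOn w (Icc 0 1))
    (w' : ℝ → ℝ)
    (hw_diff : ∀ r ∈ Ioo (0:ℝ) 1, HasDerivAt w (w' r) r)
    (hw' : ∀ r ∈ Ioo (0:ℝ) 1, 0 ≤ w' r)
    (v v' v'' v''' : ℝ → ℝ)
    (hv_cont : ContinuousOn v (Icc 0 1))
    (hv : ∀ r ∈ Icc (0:ℝ) 1, HasDerivWithinAt v (v' r) (Icc 0 1) r)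
    (hv'_cont : ContinuousOn v' (Icc 0 1))
    (hv' : ∀ r ∈ Ioo (0:ℝ) 1, HasDerivAt v' (v'' r) r)
    (hv'' : ∀ r ∈ Ioo (0:ℝ) 1, HasDerivAt v'' (v''' r) r)
    (hv'0 : v' 0 = 0) (hv'1 : v' 1 = 0)
    (heq : ∀ r ∈ Ioo (0:ℝ) 1,
      -v'' r + (b r * r - ((N : ℝ) - 1) / r) * v' r + v r = w r) :
    ∀ r ∈ Icc (0:ℝ) 1, 0 ≤ v' r := by
  intro r hr
  obtain ⟨r₀, hr₀, hmin⟩ := isCompact_Icc.exists_isMinOn (nonempty_Icc.2 zero_le_one) hv'_cont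
  by_cases h0 : 0 ≤ v' r₀
  · exact h0.trans (hmin hr)
  push_neg at h0
  exfalso
  have hr₀0 : r₀ ≠ 0 := fun h => by rw [h, hv'0] at h0; exact lt_irrefl _ h0
  have hr₀1 : r₀ ≠ 1 := fun h => by rw [h, hv'1] at h0; exact lt_irrefl _ h0
  have hr₀I : r₀ ∈ Ioo (0:ℝ) 1 :=
    ⟨lt_of_le_of_ne hr₀.1 (Ne.symm hr₀0), lt_of_le_of_ne hr₀.2 hr₀1⟩
  have hmem : Icc (0:ℝ) 1 ∈ nhds r₀ := Icc_mem_nhds hr₀I.1 hr₀I.2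
  have hloc : IsLocalMin v' r₀ := hmin.isLocalMin hmem
  have hv''0 : v'' r₀ = 0 := hloc.hasDerivAt_eq_zero (hv' r₀ hr₀I)
  have hbr : HasDerivAt (fun t => b t * t) (deriv (fun t => b t * t) r₀) r₀ :=
    (hrb_diff r₀ hr₀I).hasDerivAt
  have hinv : HasDerivAt (fun t : ℝ => ((N:ℝ)-1)/t) (-(((N:ℝ)-1)/r₀^2)) r₀ := by
    have h := (hasDerivAt_inv (ne_of_gt hr₀I.1)).const_mul ((N:ℝ)-1)
    simpa [div_eq_mul_inv, mul_neg] using h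
  have hvd : HasDerivAt v (v' r₀) r₀ :=
    (hv r₀ (Ioo_subset_Icc_self hr₀I)).hasDerivAt hmem
  have hv'd : HasDerivAt v' (v'' r₀) r₀ := hv' r₀ hr₀I
  have hwd : HasDerivAt w (w' r₀) r₀ := hw_diff r₀ hr₀I
  set Q : ℝ := deriv (fun t => b t * t) r₀ + ((N:ℝ)-1)/r₀^2 with hQ
  have hRHS : HasDerivAt (fun r => (b r * r - ((N:ℝ)-1)/r) * v' r + v r - w r)
      ((Q + 1) * v' r₀ - w' r₀) r₀ := by
    have h := (((hbr.sub hinv).mul hv'd).add hvd).sub hwd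
    refine h.congr_deriv ?_
    rw [hQ, hv''0]; ring
  have hEq : (fun r => (b r * r - ((N:ℝ)-1)/r) * v' r + v r - w r) =ᶠ[nhds r₀] v'' := by
    filter_upwards [Ioo_mem_nhds hr₀I.1 hr₀I.2] with x hx
    have := heq x hx; linarith
  have h3 : v''' r₀ = (Q + 1) * v' r₀ - w' r₀ :=
    (hv'' r₀ hr₀I).unique (hRHS.congr_of_eventuallyEq hEq.symm)
  have hQpos : 0 < Q + 1 := by
    have := hrb r₀ hr₀I
    rw [hQ]; linarith
  have h3neg : v''' r₀ < 0 := by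
    have hw0 := hw' r₀ hr₀I
    have : (Q + 1) * v' r₀ < 0 := mul_neg_of_pos_of_neg hQpos h0
    linarith [h3]
  have hslope : Filter.Tendsto (slope v'' r₀) (nhdsWithin r₀ {r₀}ᶜ) (nhds (v''' r₀)) :=
    hasDerivAt_iff_tendsto_slope.1 (hv'' r₀ hr₀I)
  have h1 : ∀ᶠ x in nhdsWithin r₀ {r₀}ᶜ, slope v'' r₀ x < 0 :=
    hslope.eventually_lt_const h3neg
  have h1' : ∀ᶠ x in nhdsWithin r₀ (Ioi r₀), slope v'' r₀ x < 0 :=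
    h1.filter_mono (nhdsWithin_mono _ fun x hx => ne_of_gt hx)
  have hev2 : ∀ᶠ x in nhdsWithin r₀ (Ioi r₀), v'' x < 0 := by
    filter_upwards [h1', self_mem_nhdsWithin] with x hx hx'
    rw [slope_def_field, hv''0, sub_zero] at hx
    rcases div_neg_iff.1 hx with ⟨_, h⟩ | ⟨h, _⟩
    · have : r₀ < x := hx'; linarith
    · exact h
  obtain ⟨c, hc, hsub⟩ := mem_nhdsGT_iff_exists_Ioo_subset.1 hev2
  set m : ℝ := (r₀ + min c 1) / 2 with hm
  have hm1 : r₀ < min c 1 := lt_min hc hr₀I.2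
  have hmgt : r₀ < m := by rw [hm]; linarith
  have hmlt : m < min c 1 := by rw [hm]; linarith
  have hmltc : m < c := hmlt.trans_le (min_le_left _ _)
  have hmlt1 : m < 1 := hmlt.trans_le (min_le_right _ _)
  have hsubIcc : Icc r₀ m ⊆ Icc (0:ℝ) 1 :=
    Icc_subset_Icc hr₀.1 hmlt1.le
  have hanti : StrictAntiOn v' (Icc r₀ m) := by
    apply strictAntiOn_of_deriv_neg (convex_Icc _ _) (hv'_cont.mono hsubIcc)
    intro x hx
    rw [interior_Icc] at hx
    have hxI : x ∈ Ioo (0:ℝ) 1 := ⟨hr₀I.1.trans hx.1, hx.2.trans hmlt1⟩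
    rw [(hv' x hxI).deriv]
    exact hsub ⟨hx.1, hx.2.trans hmltc⟩
  have : v' m < v' r₀ :=
    hanti (left_mem_Icc.2 hmgt.le) (right_mem_Icc.2 hmgt.le) hmgt
  have hmin' : v' r₀ ≤ v' m := hmin ⟨hr₀.1.trans hmgt.le, hmlt1.le⟩
  linarith
end

section
/- Let N ≥ 2. Let b : [0,1] → ℝ be continuous and nonpositive such that r ↦ r·b(r) is differentiable on (0,1) with (d/dr)(b(r)·r) > −1 − (N−1)/r² for all r ∈ (0,1). Let v : [0,1] → ℝ be continuously differentiable on [0,1], twice continuously differentiable on (0,1], with v'(0) = v'(1) = 0 and −v''(r) + (b(r)·r − (N−1)/r)·v'(r) + v(r) = 0 for all r ∈ (0,1). Then v(r) = 0 for all r ∈ [0,1]. -/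
open Set intervalIntegral

theorem radial_nonpos (N : ℕ) (hN : 2 ≤ N) (b : ℝ → ℝ)
    (hb_cont : ContinuousOn b (Icc 0 1))
    (v v' v'' : ℝ → ℝ)
    (hv : ∀ r ∈ Icc (0:ℝ) 1, HasDerivWithinAt v (v' r) (Icc 0 1) r)
    (hv'_cont : ContinuousOn v' (Icc 0 1))
    (hv' : ∀ r ∈ Ioc (0:ℝ) 1, HasDerivWithinAt v' (v'' r) (Ioc 0 1) r)
    (hv'0 : v' 0 = 0) (hv'1 : v' 1 = 0)
    (heq : ∀ r ∈ Ioo (0:ℝ) 1,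
      -v'' r + (b r * r - ((N : ℝ) - 1) / r) * v' r + v r = 0) :
    ∀ r ∈ Icc (0:ℝ) 1, v r ≤ 0 := by
  -- extend b continuously to ℝ
  obtain ⟨bE, hbE_cont, hbE_eq⟩ : ∃ bE : ℝ → ℝ, Continuous bE ∧ ∀ r ∈ Icc (0:ℝ) 1, bE r = b r := by
    refine ⟨IccExtend zero_le_one ((Icc (0:ℝ) 1).restrict b), ?_, ?_⟩
    · exact (continuousOn_iff_continuous_restrict.1 hb_cont).Icc_extend'
    · intro r hr; rw [IccExtend_of_mem _ _ hr]; rfl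
  set g : ℝ → ℝ := fun r => bE r * r with hgdef
  have hg : Continuous g := hbE_cont.mul continuous_id
  set B : ℝ → ℝ := fun u => ∫ t in (0:ℝ)..u, g t with hBdef
  have hB : ∀ r : ℝ, HasDerivAt B (g r) r := fun r =>
    integral_hasDerivAt_right (hg.intervalIntegrable _ _)
      (hg.stronglyMeasurableAtFilter _ _) hg.continuousAt
  have hBcont : Continuous B :=
    (Differentiable.continuous (fun r => (hB r).differentiableAt))
  set φ : ℝ → ℝ := fun r => r ^ (N - 1) * Real.exp (-(B r)) with hφdef
  have hφcont : Continuous φ := (continuous_pow _).mul (Real.continuous_exp.comp hBcont.neg)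
  have hφpos : ∀ r : ℝ, 0 < r → 0 < φ r := fun r hr =>
    mul_pos (pow_pos hr _) (Real.exp_pos _)
  have hNcast : ((N - 1 : ℕ) : ℝ) = (N : ℝ) - 1 := by
    have : 1 ≤ N := by omega
    push_cast [this]; ring
  have hφD : ∀ r ∈ Ioo (0:ℝ) 1, HasDerivAt φ (φ r * (((N : ℝ) - 1) / r - g r)) r := by
    intro r hr
    have hr0 : r ≠ 0 := ne_of_gt hr.1
    have h1 : HasDerivAt (fun x : ℝ => x ^ (N - 1)) (((N - 1 : ℕ) : ℝ) * r ^ (N - 2)) r := by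
      have := hasDerivAt_pow (N - 1) r
      exact this.congr_deriv (by rw [show N - 1 - 1 = N - 2 by omega])
    have h2 : HasDerivAt (fun x : ℝ => Real.exp (-(B x))) (Real.exp (-(B r)) * (-(g r))) r :=
      ((hB r).neg).exp
    have h3 := h1.mul h2
    have hpow : r ^ (N - 1) = r ^ (N - 2) * r := by
      rw [← pow_succ]; congr 1; omega
    refine h3.congr_deriv ?_
    rw [hNcast, hφdef]
    simp only []
    field_simp [hpow]
    rw [hpow]; ring
  set w : ℝ → ℝ := fun r => φ r * v' r with hwdef
  have hw_cont : ContinuousOn w (Icc 0 1) := (hφcont.continuousOn).mul hv'_cont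
  have hwD : ∀ r ∈ Ioo (0:ℝ) 1, HasDerivAt w (φ r * v r) r := by
    intro r hr
    have h2 : HasDerivAt v' (v'' r) r :=
      (hv' r ⟨hr.1, le_of_lt hr.2⟩).hasDerivAt (Ioc_mem_nhds hr.1 hr.2)
    have h3 := (hφD r hr).mul h2
    refine h3.congr_deriv ?_
    have hb_eq : g r = b r * r := by
      rw [hgdef]; simp only []
      rw [hbE_eq r ⟨le_of_lt hr.1, le_of_lt hr.2⟩]
    have he := heq r hr
    have hv''eq : v'' r = (b r * r - ((N : ℝ) - 1) / r) * v' r + v r := by linarith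
    rw [hv''eq, hb_eq]
    ring
  have hv_cont : ContinuousOn v (Icc 0 1) := fun r hr => (hv r hr).continuousWithinAt
  have hvD : ∀ r ∈ Ioo (0:ℝ) 1, HasDerivAt v (v' r) r := fun r hr =>
    (hv r ⟨le_of_lt hr.1, le_of_lt hr.2⟩).hasDerivAt (Icc_mem_nhds hr.1 hr.2)
  -- main argument
  by_contra hcon
  push_neg at hcon
  obtain ⟨r₁, hr₁, hv₁⟩ := hcon
  obtain ⟨r₀, hr₀, hmax⟩ := isCompact_Icc.exists_isMaxOn (nonempty_Icc.2 zero_le_one) hv_cont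
  have hM : 0 < v r₀ := lt_of_lt_of_le hv₁ (hmax hr₁)
  have hev : ∀ᶠ x in nhdsWithin r₀ (Icc 0 1), 0 < v x :=
    (hv_cont r₀ hr₀).eventually (eventually_gt_nhds hM)
  rw [eventually_nhdsWithin_iff, Metric.eventually_nhds_iff] at hev
  obtain ⟨ε, hε, hball⟩ := hev
  rcases eq_or_lt_of_le hr₀.1 with h0 | h0
  · -- r₀ = 0
    set δ : ℝ := min (ε / 2) 1 with hδdef
    have hδpos : 0 < δ := lt_min (by linarith) one_pos
    have hδ1 : δ ≤ 1 := min_le_right _ _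
    have hδε : δ < ε := lt_of_le_of_lt (min_le_left _ _) (by linarith)
    have hvpos : ∀ x ∈ Ioo (0:ℝ) δ, 0 < v x := by
      intro x hx
      have hx1 : x ∈ Icc (0:ℝ) 1 := ⟨le_of_lt hx.1, le_trans (le_of_lt hx.2) hδ1⟩
      apply hball _ hx1
      rw [Real.dist_eq, ← h0, sub_zero, abs_of_pos hx.1]
      linarith [hx.2]
    have hsub : Ioo (0:ℝ) δ ⊆ Ioo (0:ℝ) 1 := Ioo_subset_Ioo le_rfl hδ1
    have hwm : StrictMonoOn w (Icc 0 δ) := by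
      apply strictMonoOn_of_deriv_pos (convex_Icc 0 δ)
        (hw_cont.mono (Icc_subset_Icc le_rfl hδ1))
      intro x hx
      rw [interior_Icc] at hx
      rw [(hwD x (hsub hx)).deriv]
      exact mul_pos (hφpos x hx.1) (hvpos x hx)
    have hw0 : w 0 = 0 := by rw [hwdef]; simp [hv'0]
    have hv'pos : ∀ x ∈ Ioo (0:ℝ) δ, 0 < v' x := by
      intro x hx
      have h1 : w 0 < w x := hwm ⟨le_rfl, le_of_lt hδpos⟩ ⟨le_of_lt hx.1, le_of_lt hx.2⟩ hx.1
      rw [hw0] at h1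
      have h2 := hφpos x hx.1
      simp only [hwdef] at h1
      by_contra hc
      push_neg at hc
      nlinarith [mul_nonpos_of_nonneg_of_nonpos h2.le hc]
    have hvm : StrictMonoOn v (Icc 0 δ) := by
      apply strictMonoOn_of_deriv_pos (convex_Icc 0 δ)
        (hv_cont.mono (Icc_subset_Icc le_rfl hδ1))
      intro x hx
      rw [interior_Icc] at hx
      rw [(hvD x (hsub hx)).deriv]
      exact hv'pos x hx
    have hlt : v 0 < v δ := hvm ⟨le_rfl, le_of_lt hδpos⟩ ⟨le_of_lt hδpos, le_rfl⟩ hδpos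
    have hle : v δ ≤ v r₀ := hmax ⟨le_of_lt hδpos, hδ1⟩
    rw [← h0] at hle
    linarith
  · -- 0 < r₀
    have hv'r₀ : v' r₀ = 0 := by
      rcases eq_or_lt_of_le hr₀.2 with h1 | h1
      · rw [h1, hv'1]
      · have hloc : IsLocalMax v r₀ := hmax.isLocalMax (Icc_mem_nhds h0 h1)
        exact hloc.hasDerivAt_eq_zero ((hv r₀ hr₀).hasDerivAt (Icc_mem_nhds h0 h1))
    have hwr₀ : w r₀ = 0 := by rw [hwdef]; simp [hv'r₀]
    set δ : ℝ := min (ε / 2) (r₀ / 2) with hδdef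
    have hδpos : 0 < δ := lt_min (by linarith) (by linarith)
    have hδr : δ ≤ r₀ / 2 := min_le_right _ _
    have hδε : δ < ε := lt_of_le_of_lt (min_le_left _ _) (by linarith)
    have hsub : Ioo (r₀ - δ) r₀ ⊆ Ioo (0:ℝ) 1 := by
      intro x hx
      constructor
      · linarith [hx.1]
      · exact lt_of_lt_of_le hx.2 hr₀.2
    have hvpos : ∀ x ∈ Ioo (r₀ - δ) r₀, 0 < v x := by
      intro x hx
      have hx1 : x ∈ Icc (0:ℝ) 1 := ⟨by linarith [hx.1], le_trans (le_of_lt hx.2) hr₀.2⟩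
      apply hball _ hx1
      rw [Real.dist_eq, abs_of_neg (by linarith [hx.2] : x - r₀ < 0)]
      linarith [hx.1]
    have hIsub : Icc (r₀ - δ) r₀ ⊆ Icc (0:ℝ) 1 := by
      intro x hx
      exact ⟨by linarith [hx.1], le_trans hx.2 hr₀.2⟩
    have hwm : StrictMonoOn w (Icc (r₀ - δ) r₀) := by
      apply strictMonoOn_of_deriv_pos (convex_Icc _ _) (hw_cont.mono hIsub)
      intro x hx
      rw [interior_Icc] at hx
      rw [(hwD x (hsub hx)).deriv]
      exact mul_pos (hφpos x (hsub hx).1) (hvpos x hx)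
    have hv'neg : ∀ x ∈ Ioo (r₀ - δ) r₀, v' x < 0 := by
      intro x hx
      have h1 : w x < w r₀ :=
        hwm ⟨le_of_lt hx.1, le_of_lt hx.2⟩ ⟨by linarith, le_rfl⟩ hx.2
      rw [hwr₀] at h1
      have h2 := hφpos x (hsub hx).1
      simp only [hwdef] at h1
      by_contra hc
      push_neg at hc
      nlinarith [mul_nonneg h2.le hc]
    have hvm : StrictAntiOn v (Icc (r₀ - δ) r₀) := by
      apply strictAntiOn_of_deriv_neg (convex_Icc _ _) (hv_cont.mono hIsub)
      intro x hx
      rw [interior_Icc] at hx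
      rw [(hvD x (hsub hx)).deriv]
      exact hv'neg x hx
    have hlt : v r₀ < v (r₀ - δ) :=
      hvm ⟨le_rfl, by linarith⟩ ⟨by linarith, le_rfl⟩ (by linarith)
    have hle : v (r₀ - δ) ≤ v r₀ := hmax (hIsub ⟨le_rfl, by linarith⟩)
    linarith

/-- Injectivity of the radial Neumann operator `L = -Δ + b(|x|) x·∇ + Id`:
the homogeneous equation `-v'' + (b(r)r - (N-1)/r) v' + v = 0` on `(0,1)` with
`v'(0) = v'(1) = 0` only admits the trivial solution. -/
theorem stmt_6 (N : ℕ) (hN : 2 ≤ N) (b : ℝ → ℝ)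
    (hb_cont : ContinuousOn b (Icc 0 1))
    (hb_nonpos : ∀ r ∈ Icc (0:ℝ) 1, b r ≤ 0)
    (hrb_diff : ∀ r ∈ Ioo (0:ℝ) 1, DifferentiableAt ℝ (fun t => b t * t) r)
    (hrb : ∀ r ∈ Ioo (0:ℝ) 1,
      -1 - ((N : ℝ) - 1) / r ^ 2 < deriv (fun t => b t * t) r)
    (v v' v'' : ℝ → ℝ)
    (hv : ∀ r ∈ Icc (0:ℝ) 1, HasDerivWithinAt v (v' r) (Icc 0 1) r)
    (hv'_cont : ContinuousOn v' (Icc 0 1))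
    (hv' : ∀ r ∈ Ioc (0:ℝ) 1, HasDerivWithinAt v' (v'' r) (Ioc 0 1) r)
    (hv''_cont : ContinuousOn v'' (Ioc 0 1))
    (hv'0 : v' 0 = 0) (hv'1 : v' 1 = 0)
    (heq : ∀ r ∈ Ioo (0:ℝ) 1,
      -v'' r + (b r * r - ((N : ℝ) - 1) / r) * v' r + v r = 0) :
    ∀ r ∈ Icc (0:ℝ) 1, v r = 0 := by
  have h1 := radial_nonpos N hN b hb_cont v v' v'' hv hv'_cont hv' hv'0 hv'1 heq
  have h2 := radial_nonpos N hN b hb_cont (fun r => -v r) (fun r => -v' r) (fun r => -v'' r)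
    (fun r hr => (hv r hr).neg) hv'_cont.neg (fun r hr => (hv' r hr).neg)
    (by simp [hv'0]) (by simp [hv'1])
    (by intro r hr; have := heq r hr; ring_nf; ring_nf at this; linarith)
  intro r hr
  have := h1 r hr
  have := h2 r hr
  linarith
end

section
/- Let N ≥ 2. Let a : [0,1] → ℝ be continuously differentiable, nondecreasing, with a(0) > 0; let b : [0,1] → ℝ be continuous and nonpositive with (d/dr)(b(r)·r) > −1 − (N−1)/r² on (0,1); let f : [0,∞) → ℝ be continuously differentiable and nondecreasing with f(0) = 0, f'(0) = 0, and liminf_{s→+∞} f(s)/s > 1/a(0). Then: (i) there exists λ̄ ≥ 0 such that for every λ > λ̄ there is no nonnegative nondecreasing function u : [0,1] → ℝ, continuously differentiable on [0,1] and twice differentiable on (0,1), with u'(0) = u'(1) = 0 and −u''(r) + (b(r)·r − (N−1)/r)·u'(r) + u(r) = a(r)·f(u(r)) + λ on (0,1); and (ii) there exists K₁ > 0 such that every such nonnegative nondecreasing solution u with parameter λ ∈ [0, λ̄] satisfies ∫₀¹ u(r) r^{N−1} dr ≤ K₁. -/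
open Set Filter
open Topology

/-- `u` (with derivative `u'` and second derivative `u''`) is a nonnegative
nondecreasing radial solution of the Neumann problem
`-Δu + b(|x|) x·∇u + u = a(|x|) f(u) + lam` on the unit ball of `ℝ^N`,
written in radial coordinates. -/
def IsRadialSol (N : ℕ) (a b f : ℝ → ℝ) (lam : ℝ) (u u' u'' : ℝ → ℝ) : Prop :=
  (∀ r ∈ Set.Icc (0:ℝ) 1, 0 ≤ u r) ∧
  MonotoneOn u (Set.Icc 0 1) ∧
  (∀ r ∈ Set.Icc (0:ℝ) 1, HasDerivWithinAt u (u' r) (Set.Icc 0 1) r) ∧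
  ContinuousOn u' (Set.Icc 0 1) ∧
  (∀ r ∈ Set.Ioo (0:ℝ) 1, HasDerivAt u' (u'' r) r) ∧
  u' 0 = 0 ∧ u' 1 = 0 ∧
  ∀ r ∈ Set.Ioo (0:ℝ) 1,
    -u'' r + (b r * r - ((N : ℝ) - 1) / r) * u' r + u r = a r * f (u r) + lam


lemma aux_deriv_nonneg_s7 {u u' : ℝ → ℝ} (hmono : MonotoneOn u (Icc 0 1))
    (hd : ∀ r ∈ Icc (0:ℝ) 1, HasDerivWithinAt u (u' r) (Icc 0 1) r) :
    ∀ r ∈ Icc (0:ℝ) 1, 0 ≤ u' r := by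
  intro r hr
  have htend := hasDerivWithinAt_iff_tendsto_slope.mp (hd r hr)
  rcases lt_or_eq_of_le hr.2 with h1 | h1
  · have hsub : Ioo r 1 ⊆ Icc (0:ℝ) 1 \ {r} := by
      intro y hy
      exact ⟨⟨le_trans hr.1 hy.1.le, hy.2.le⟩, ne_of_gt hy.1⟩
    have := htend.mono_left (nhdsWithin_mono r hsub)
    have hne : (𝓝[Ioo r 1] r).NeBot := left_nhdsWithin_Ioo_neBot h1
    refine ge_of_tendsto this ?_
    filter_upwards [self_mem_nhdsWithin] with y hy
    rw [slope_def_field]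
    apply div_nonneg
    · have := hmono ⟨hr.1, hr.2⟩ ⟨le_trans hr.1 hy.1.le, hy.2.le⟩ hy.1.le
      linarith
    · linarith [hy.1]
  · subst h1
    have hsub : Ioo (0:ℝ) 1 ⊆ Icc (0:ℝ) 1 \ {1} := by
      intro y hy
      exact ⟨⟨hy.1.le, hy.2.le⟩, ne_of_lt hy.2⟩
    have := htend.mono_left (nhdsWithin_mono 1 hsub)
    have hne : (𝓝[Ioo (0:ℝ) 1] 1).NeBot := right_nhdsWithin_Ioo_neBot one_pos
    refine ge_of_tendsto this ?_
    filter_upwards [self_mem_nhdsWithin] with y hy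
    rw [slope_def_field]
    apply div_nonneg_of_nonpos
    · have := hmono ⟨hy.1.le, hy.2.le⟩ (by norm_num) hy.2.le
      linarith
    · linarith [hy.2]

lemma aux_key (N : ℕ) (hN : 2 ≤ N) (a b f : ℝ → ℝ)
    (ha_cont : ContinuousOn a (Icc 0 1))
    (ha_mono : MonotoneOn a (Icc 0 1)) (ha0 : 0 < a 0)
    (hb_cont : ContinuousOn b (Icc 0 1))
    (hb_nonpos : ∀ r ∈ Icc (0:ℝ) 1, b r ≤ 0)
    (hf_cont : ContinuousOn f (Ici 0))
    (hf_mono : MonotoneOn f (Ici 0)) (hf0 : f 0 = 0)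
    (μ s₀ lam : ℝ) (hμ : 0 < μ)
    (hflb : ∀ s : ℝ, 0 ≤ s → μ * s - μ * s₀ ≤ f s)
    (u u' u'' : ℝ → ℝ) (h : IsRadialSol N a b f lam u u' u'') :
    0 ≤ (∫ r in (0:ℝ)..1, u r * r ^ (N-1)) ∧
    (a 0 * μ - 1) * (∫ r in (0:ℝ)..1, u r * r ^ (N-1)) ≤ (a 0 * μ * s₀ - lam) / N := by
  obtain ⟨hupos, humono, hud, hu'cont, hu''d, hu'0, hu'1, hode⟩ := h
  have hu'nonneg := aux_deriv_nonneg_s7 humono hud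
  have hucont : ContinuousOn u (Icc 0 1) := fun r hr => (hud r hr).continuousWithinAt
  have hmaps : MapsTo u (Icc 0 1) (Ici 0) := fun r hr => hupos r hr
  have hfu_cont : ContinuousOn (fun r => f (u r)) (Icc 0 1) := hf_cont.comp hucont hmaps
  set G : ℝ → ℝ := fun r => (u r + b r * r * u' r - a r * f (u r) - lam) * r ^ (N-1) with hG
  have hGcont : ContinuousOn G (Icc 0 1) := by
    apply ContinuousOn.mul _ (continuous_pow _).continuousOn
    exact ((hucont.add ((hb_cont.mul continuousOn_id).mul hu'cont)).sub
      (ha_cont.mul hfu_cont)).sub continuousOn_const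
  have hGint : IntervalIntegrable G MeasureTheory.volume 0 1 :=
    hGcont.intervalIntegrable_of_Icc zero_le_one
  have hFcont : ContinuousOn (fun r => u' r * r ^ (N-1)) (Icc 0 1) :=
    hu'cont.mul (continuous_pow _).continuousOn
  have hcast : ((N - 1 : ℕ) : ℝ) = (N : ℝ) - 1 := by
    rw [Nat.cast_sub (by omega)]; norm_num
  have hFderiv : ∀ x ∈ Ioo (0:ℝ) 1,
      HasDerivWithinAt (fun r => u' r * r ^ (N-1)) (G x) (Ioi x) x := by
    intro x hx
    have hx0 : x ≠ 0 := ne_of_gt hx.1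
    have h1 : HasDerivAt (fun r : ℝ => r ^ (N-1)) (((N:ℝ) - 1) * x ^ (N-2)) x := by
      have hh := hasDerivAt_pow (N-1) x
      rw [show (N-1-1 : ℕ) = N-2 by omega, hcast] at hh
      exact hh
    have h2 := (hu''d x hx).mul h1
    apply HasDerivAt.hasDerivWithinAt
    refine h2.congr_deriv ?_
    have hode' := hode x hx
    have hpow : x ^ (N-1) = x * x ^ (N-2) := by
      rw [← pow_succ']
      congr 1; omega
    have e1 : ((N:ℝ)-1)/x * u' x * x ^ (N-1) = ((N:ℝ)-1) * u' x * x^(N-2) := by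
      rw [hpow]; field_simp
    have e2 : u'' x * x^(N-1) = ((b x * x) * u' x + u x - a x * f (u x) - lam) * x^(N-1)
        - ((N:ℝ)-1)/x * u' x * x^(N-1) := by
      linear_combination (-(x ^ (N-1))) * hode'
    rw [hG]
    simp only []
    rw [e2, e1]; ring
  have hFTC : (∫ r in (0:ℝ)..1, G r) = 0 := by
    rw [intervalIntegral.integral_eq_sub_of_hasDeriv_right_of_le zero_le_one hFcont hFderiv hGint]
    rw [hu'0, hu'1]; ring
  -- integrability of pieces
  have hint_u : IntervalIntegrable (fun r => u r * r ^ (N-1)) MeasureTheory.volume 0 1 :=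
    (hucont.mul (continuous_pow _).continuousOn).intervalIntegrable_of_Icc zero_le_one
  have hc2cont : ContinuousOn (fun r => (a r * f (u r) + lam - b r * r * u' r) * r ^ (N-1)) (Icc 0 1) := by
    apply ContinuousOn.mul _ (continuous_pow _).continuousOn
    exact ((ha_cont.mul hfu_cont).add continuousOn_const).sub
      ((hb_cont.mul continuousOn_id).mul hu'cont)
  have hint_c2 : IntervalIntegrable (fun r => (a r * f (u r) + lam - b r * r * u' r) * r ^ (N-1))
      MeasureTheory.volume 0 1 := hc2cont.intervalIntegrable_of_Icc zero_le_one
  have hint_c3 : IntervalIntegrable (fun r => (a 0 * μ * u r - a 0 * μ * s₀ + lam) * r ^ (N-1))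
      MeasureTheory.volume 0 1 := by
    apply ContinuousOn.intervalIntegrable_of_Icc zero_le_one
    apply ContinuousOn.mul _ (continuous_pow _).continuousOn
    exact ((continuousOn_const.mul hucont).sub continuousOn_const).add continuousOn_const
  set I := ∫ r in (0:ℝ)..1, u r * r ^ (N-1) with hI
  have hsplit : I = ∫ r in (0:ℝ)..1, (a r * f (u r) + lam - b r * r * u' r) * r ^ (N-1) := by
    have := intervalIntegral.integral_sub hint_u hint_c2
    have hGeq : (∫ r in (0:ℝ)..1, G r)
        = ∫ r in (0:ℝ)..1, (u r * r ^ (N-1) - (a r * f (u r) + lam - b r * r * u' r) * r ^ (N-1)) := by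
      apply intervalIntegral.integral_congr
      intro r hr; simp only [hG]; ring
    rw [hGeq, this] at hFTC
    linarith
  have hmono_int : (∫ r in (0:ℝ)..1, (a 0 * μ * u r - a 0 * μ * s₀ + lam) * r ^ (N-1)) ≤
      ∫ r in (0:ℝ)..1, (a r * f (u r) + lam - b r * r * u' r) * r ^ (N-1) := by
    apply intervalIntegral.integral_mono_on zero_le_one hint_c3 hint_c2
    intro r hr
    have hrpow : (0:ℝ) ≤ r ^ (N-1) := pow_nonneg hr.1 _
    apply mul_le_mul_of_nonneg_right _ hrpow
    have h1 : a 0 ≤ a r := ha_mono (left_mem_Icc.mpr zero_le_one) hr hr.1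
    have h2 : 0 ≤ f (u r) := by
      rw [← hf0]
      exact hf_mono (self_mem_Ici) (hupos r hr) (hupos r hr)
    have h3 : μ * u r - μ * s₀ ≤ f (u r) := hflb _ (hupos r hr)
    have h4 : 0 ≤ -(b r * r * u' r) := by
      have h41 := mul_nonneg (mul_nonneg (neg_nonneg.mpr (hb_nonpos r hr)) hr.1) (hu'nonneg r hr)
      have h42 : (-(b r)) * r * u' r = -(b r * r * u' r) := by ring
      linarith
    nlinarith
  have hval : (∫ r in (0:ℝ)..1, (a 0 * μ * u r - a 0 * μ * s₀ + lam) * r ^ (N-1))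
      = a 0 * μ * I + (lam - a 0 * μ * s₀) * (1 / N) := by
    have hsplit2 : ∀ r : ℝ, (a 0 * μ * u r - a 0 * μ * s₀ + lam) * r ^ (N-1)
        = a 0 * μ * (u r * r ^ (N-1)) + (lam - a 0 * μ * s₀) * r ^ (N-1) := by
      intro r; ring
    simp_rw [hsplit2]
    rw [intervalIntegral.integral_add (hint_u.const_mul _)
      ((intervalIntegral.intervalIntegrable_pow _).const_mul _),
      intervalIntegral.integral_const_mul, intervalIntegral.integral_const_mul, integral_pow]
    have hNn : (N - 1 + 1 : ℕ) = N := by omega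
    rw [hNn]
    rw [show ((N-1:ℕ):ℝ) + 1 = (N:ℝ) by rw [hcast]; ring]
    rw [zero_pow (show N ≠ 0 by omega), one_pow]
    ring
  have hInonneg : 0 ≤ I := by
    apply intervalIntegral.integral_nonneg zero_le_one
    intro r hr
    exact mul_nonneg (hupos r hr) (pow_nonneg hr.1 _)
  refine ⟨hInonneg, ?_⟩
  have hNpos : (0:ℝ) < N := by positivity
  have : a 0 * μ * I + (lam - a 0 * μ * s₀) * (1/N) ≤ I := by
    rw [← hval, hsplit]; exact hmono_int
  have h5 : (a 0 * μ - 1) * I ≤ (a 0 * μ * s₀ - lam) * (1/N) := by nlinarith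
  calc (a 0 * μ - 1) * I ≤ (a 0 * μ * s₀ - lam) * (1/N) := h5
    _ = (a 0 * μ * s₀ - lam) / N := by ring

/-- Nonexistence of nonnegative nondecreasing radial solutions for large `λ`, and a
uniform `L¹` a priori bound for `λ ∈ [0, λ̄]`. -/
theorem stmt_7 (N : ℕ) (hN : 2 ≤ N) (a b f : ℝ → ℝ)
    (ha_diff : ContDiffOn ℝ 1 a (Icc 0 1))
    (ha_mono : MonotoneOn a (Icc 0 1))
    (ha0 : 0 < a 0)
    (hb_cont : ContinuousOn b (Icc 0 1))
    (hb_nonpos : ∀ r ∈ Icc (0:ℝ) 1, b r ≤ 0)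
    (hrb_diff : ∀ r ∈ Ioo (0:ℝ) 1, DifferentiableAt ℝ (fun t => b t * t) r)
    (hrb : ∀ r ∈ Ioo (0:ℝ) 1,
      -1 - ((N : ℝ) - 1) / r ^ 2 < deriv (fun t => b t * t) r)
    (hf_diff : ContDiffOn ℝ 1 f (Ici 0))
    (hf_mono : MonotoneOn f (Ici 0))
    (hf0 : f 0 = 0)
    (hf'0 : derivWithin f (Ici 0) 0 = 0)
    (hf_liminf : ((1 / a 0 : ℝ) : EReal) <
      Filter.liminf (fun s : ℝ => ((f s / s : ℝ) : EReal)) Filter.atTop) :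
    ∃ lambar : ℝ, 0 ≤ lambar ∧
      (∀ lam : ℝ, lambar < lam →
        ∀ u u' u'' : ℝ → ℝ, ¬ IsRadialSol N a b f lam u u' u'') ∧
      ∃ K₁ > (0:ℝ), ∀ lam ∈ Icc (0:ℝ) lambar, ∀ u u' u'' : ℝ → ℝ,
        IsRadialSol N a b f lam u u' u'' →
        ∫ r in (0:ℝ)..1, u r * r ^ (N - 1) ≤ K₁ := by
  obtain ⟨c, hc1, hc2⟩ := exists_between hf_liminf
  have hcnt : c ≠ ⊤ := by rintro rfl; exact absurd hc2 (by simp)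
  have hcnb : c ≠ ⊥ := by rintro rfl; exact absurd hc1 (by simp)
  set μ := c.toReal with hμdef
  have hcμ : (μ : EReal) = c := EReal.coe_toReal hcnt hcnb
  have hμ1 : 1 / a 0 < μ := by
    rw [← EReal.coe_lt_coe_iff, hcμ]; exact hc1
  have hev : ∀ᶠ s in atTop, (μ : EReal) < ((f s / s : ℝ) : EReal) :=
    eventually_lt_of_lt_liminf (hcμ ▸ hc2)
  have hev' : ∀ᶠ s in atTop, μ < f s / s := by
    filter_upwards [hev] with s hs
    exact EReal.coe_lt_coe_iff.mp hs
  obtain ⟨s₁, hs₁⟩ := eventually_atTop.mp hev'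
  have hμpos : 0 < μ := lt_trans (by positivity) hμ1
  set s₀ : ℝ := max s₁ 1 with hs₀def
  have hs₀pos : (0:ℝ) < s₀ := lt_of_lt_of_le one_pos (le_max_right _ _)
  have hflb : ∀ s : ℝ, 0 ≤ s → μ * s - μ * s₀ ≤ f s := by
    intro s hs
    rcases le_or_gt s₀ s with hcase | hcase
    · have h1 : μ < f s / s := hs₁ s (le_trans (le_max_left _ _) hcase)
      have hspos : 0 < s := lt_of_lt_of_le hs₀pos hcase
      have h2 : μ * s < f s := by
        rw [lt_div_iff₀ hspos] at h1; linarith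
      nlinarith
    · have h2 : 0 ≤ f s := by
        rw [← hf0]
        exact hf_mono self_mem_Ici hs hs
      nlinarith
  have hA : 1 < a 0 * μ := by
    rw [div_lt_iff₀ ha0] at hμ1; linarith
  have hNpos : (0:ℝ) < N := by
    have : (2:ℝ) ≤ N := by exact_mod_cast hN
    linarith
  set lambar : ℝ := a 0 * μ * s₀ with hlambar
  have hlampos : 0 < lambar := by positivity
  set K₁ : ℝ := lambar / ((N : ℝ) * (a 0 * μ - 1)) + 1 with hK₁
  have hdenpos : (0:ℝ) < (N : ℝ) * (a 0 * μ - 1) := by nlinarith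
  refine ⟨lambar, le_of_lt hlampos, ?_, K₁, by positivity, ?_⟩
  · intro lam hlam u u' u'' hsol
    obtain ⟨hI0, hIle⟩ := aux_key N hN a b f ha_diff.continuousOn ha_mono ha0 hb_cont
      hb_nonpos hf_diff.continuousOn hf_mono hf0 μ s₀ lam hμpos hflb u u' u'' hsol
    have : (a 0 * μ * s₀ - lam) / (N : ℝ) < 0 := by
      apply div_neg_of_neg_of_pos _ hNpos
      linarith
    nlinarith
  · intro lam hlam u u' u'' hsol
    obtain ⟨hI0, hIle⟩ := aux_key N hN a b f ha_diff.continuousOn ha_mono ha0 hb_cont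
      hb_nonpos hf_diff.continuousOn hf_mono hf0 μ s₀ lam hμpos hflb u u' u'' hsol
    have h1 : (a 0 * μ * s₀ - lam) / (N : ℝ) ≤ lambar / (N : ℝ) := by
      apply div_le_div_of_nonneg_right _ hNpos.le
      · linarith [hlam.1]
    have h3 := le_trans hIle h1
    have h2 : (∫ r in (0:ℝ)..1, u r * r ^ (N - 1)) ≤ lambar / ((N : ℝ) * (a 0 * μ - 1)) := by
      rw [le_div_iff₀ hdenpos]
      have hdiv : lambar / (N : ℝ) * (N : ℝ) = lambar := by
        field_simp
      nlinarith
    have h4 : 0 ≤ lambar / ((N : ℝ) * (a 0 * μ - 1)) := by positivity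
    rw [hK₁]
    linarith
end

section
/- Let N ≥ 2, λ ≥ 0. Let a : [0,1] → ℝ be continuously differentiable, nondecreasing, with a(0) > 0; let b : [0,1] → ℝ be continuous and nonpositive; let f : [0,∞) → ℝ be nondecreasing with f(0) = 0. Let u : [0,1] → ℝ be nonnegative, nondecreasing, continuously differentiable on [0,1] and twice differentiable on (0,1), with u'(0) = u'(1) = 0 and −u''(r) + (b(r)·r − (N−1)/r)·u'(r) + u(r) = a(r)·f(u(r)) + λ for all r ∈ (0,1). Then for every r ∈ (0,1), u'(r) ≤ r^{1−N} · ∫₀^r u(t) t^{N−1} dt. -/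
open Set intervalIntegral MeasureTheory Filter Topology

/-- Pointwise derivative bound for nonnegative nondecreasing radial solutions:
`u'(r) ≤ r^{1-N} ∫₀^r u(t) t^{N-1} dt` for `r ∈ (0,1)`. -/
theorem stmt_9 (N : ℕ) (hN : 2 ≤ N) (lam : ℝ) (hlam : 0 ≤ lam) (a b f : ℝ → ℝ)
    (ha_diff : ContDiffOn ℝ 1 a (Icc 0 1))
    (ha_mono : MonotoneOn a (Icc 0 1))
    (ha0 : 0 < a 0)
    (hb_cont : ContinuousOn b (Icc 0 1))
    (hb_nonpos : ∀ r ∈ Icc (0:ℝ) 1, b r ≤ 0)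
    (hf_mono : MonotoneOn f (Ici 0))
    (hf0 : f 0 = 0)
    (u u' u'' : ℝ → ℝ)
    (hu_nonneg : ∀ r ∈ Icc (0:ℝ) 1, 0 ≤ u r)
    (hu_mono : MonotoneOn u (Icc 0 1))
    (hu : ∀ r ∈ Icc (0:ℝ) 1, HasDerivWithinAt u (u' r) (Icc 0 1) r)
    (hu'_cont : ContinuousOn u' (Icc 0 1))
    (hu' : ∀ r ∈ Ioo (0:ℝ) 1, HasDerivAt u' (u'' r) r)
    (hu'0 : u' 0 = 0) (hu'1 : u' 1 = 0)
    (heq : ∀ r ∈ Ioo (0:ℝ) 1,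
      -u'' r + (b r * r - ((N : ℝ) - 1) / r) * u' r + u r = a r * f (u r) + lam) :
    ∀ r ∈ Ioo (0:ℝ) 1,
      u' r ≤ r ^ (1 - (N : ℤ)) * ∫ t in (0:ℝ)..r, u t * t ^ (N - 1) := by
  obtain ⟨m, rfl⟩ : ∃ m, N = m + 2 := ⟨N - 2, by omega⟩
  intro r hr
  -- continuity of u
  have hu_cont : ContinuousOn u (Icc 0 1) := fun x hx => (hu x hx).continuousWithinAt
  -- integrand
  set g : ℝ → ℝ := fun t => u t * t ^ (m + 1) with hg_def
  have hg_cont : ContinuousOn g (Icc 0 1) := hu_cont.mul (continuousOn_pow _)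
  -- u' nonneg on Ioo 0 1
  have hu'_nonneg : ∀ s ∈ Ioo (0:ℝ) 1, 0 ≤ u' s := by
    intro s hs
    have hd : HasDerivAt u (u' s) s :=
      (hu s ⟨hs.1.le, hs.2.le⟩).hasDerivAt (Icc_mem_nhds hs.1 hs.2)
    have ht : Tendsto (slope u s) (𝓝[>] s) (𝓝 (u' s)) :=
      (hasDerivAt_iff_tendsto_slope.1 hd).mono_left
        (nhdsWithin_mono _ fun x hx => ne_of_gt hx)
    refine ge_of_tendsto ht ?_
    filter_upwards [Ioo_mem_nhdsGT_of_mem ⟨le_refl s, hs.2⟩] with t ht'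
    have hmem_s : s ∈ Icc (0:ℝ) 1 := ⟨hs.1.le, hs.2.le⟩
    have hmem_t : t ∈ Icc (0:ℝ) 1 := ⟨(hs.1.trans ht'.1).le, ht'.2.le⟩
    have := hu_mono hmem_s hmem_t ht'.1.le
    rw [slope_def_field]
    exact div_nonneg (by linarith) (by linarith [ht'.1])
  -- the primitive F and the function G
  set F : ℝ → ℝ := fun s => ∫ t in (0:ℝ)..s, g t with hF_def
  set G : ℝ → ℝ := fun s => s ^ (m + 1) * u' s with hG_def
  -- key: G r ≤ F r
  have key : G r ≤ F r := by
    have hsub : Icc (0:ℝ) r ⊆ Icc 0 1 := Icc_subset_Icc le_rfl hr.2.le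
    -- continuity of F on Icc 0 r
    have hF_cont : ContinuousOn F (Icc 0 r) := by
      have hint : IntegrableOn g (uIcc 0 r) volume := by
        rw [uIcc_of_le hr.1.le]
        exact (hg_cont.mono hsub).integrableOn_compact isCompact_Icc
      have := continuousOn_primitive_interval (f := g) (μ := volume) hint
      rwa [uIcc_of_le hr.1.le] at this
    have hG_cont : ContinuousOn G (Icc 0 r) :=
      ((continuousOn_pow _).mul (hu'_cont.mono hsub))
    -- derivative of F - G on interior
    have hderiv : ∀ s ∈ Ioo (0:ℝ) r,
        HasDerivAt (fun x => F x - G x)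
          (g s - (((m:ℝ) + 1) * s ^ m * u' s + s ^ (m + 1) * u'' s)) s := by
      intro s hs
      have hs01 : s ∈ Ioo (0:ℝ) 1 := ⟨hs.1, hs.2.trans hr.2⟩
      have hFd : HasDerivAt F (g s) s := by
        refine integral_hasDerivAt_right ?_ ?_ ?_
        · exact (hg_cont.mono (Icc_subset_Icc le_rfl hs01.2.le)).intervalIntegrable_of_Icc hs.1.le
        · exact ContinuousOn.stronglyMeasurableAtFilter isOpen_Ioo
            (hg_cont.mono Ioo_subset_Icc_self) s hs01
        · exact (hg_cont s ⟨hs01.1.le, hs01.2.le⟩).continuousAt (Icc_mem_nhds hs01.1 hs01.2)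
      have hGd : HasDerivAt G (((m:ℝ) + 1) * s ^ m * u' s + s ^ (m + 1) * u'' s) s := by
        have h1 : HasDerivAt (fun x : ℝ => x ^ (m + 1)) (((m:ℝ) + 1) * s ^ m) s := by
          simpa using hasDerivAt_pow (m + 1) s
        exact h1.mul (hu' s hs01)
      exact hFd.sub hGd
    -- nonnegativity of the derivative
    have hnonneg : ∀ s ∈ Ioo (0:ℝ) r,
        0 ≤ g s - (((m:ℝ) + 1) * s ^ m * u' s + s ^ (m + 1) * u'' s) := by
      intro s hs
      have hs01 : s ∈ Ioo (0:ℝ) 1 := ⟨hs.1, hs.2.trans hr.2⟩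
      have hsI : s ∈ Icc (0:ℝ) 1 := ⟨hs01.1.le, hs01.2.le⟩
      have hs0 : s ≠ 0 := ne_of_gt hs.1
      have hEq := heq s hs01
      have hcast : ((m + 2 : ℕ) : ℝ) - 1 = (m : ℝ) + 1 := by push_cast; ring
      rw [hcast] at hEq
      have hu''s : u'' s = (b s * s - ((m:ℝ) + 1) / s) * u' s + u s - (a s * f (u s) + lam) := by
        linarith
      have hrewrite : g s - (((m:ℝ) + 1) * s ^ m * u' s + s ^ (m + 1) * u'' s)
          = s ^ (m + 1) * (a s * f (u s) + lam - b s * s * u' s) := by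
        rw [hu''s, hg_def]
        field_simp
        ring
      rw [hrewrite]
      have hfa : 0 ≤ a s * f (u s) := by
        have haS : a 0 ≤ a s := ha_mono (left_mem_Icc.2 zero_le_one) hsI hsI.1
        have hfS : 0 ≤ f (u s) := by
          rw [← hf0]
          exact hf_mono self_mem_Ici (hu_nonneg s hsI) (hu_nonneg s hsI)
        exact mul_nonneg (by linarith) hfS
      have hb' : b s * s * u' s ≤ 0 :=
        mul_nonpos_of_nonpos_of_nonneg
          (mul_nonpos_of_nonpos_of_nonneg (hb_nonpos s hsI) hs01.1.le)
          (hu'_nonneg s hs01)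
      have hpow : (0:ℝ) ≤ s ^ (m + 1) := pow_nonneg hs01.1.le _
      nlinarith
    -- monotonicity of F - G on Icc 0 r
    have hmono : MonotoneOn (fun x => F x - G x) (Icc 0 r) := by
      refine monotoneOn_of_hasDerivWithinAt_nonneg
        (f' := fun s => g s - (((m:ℝ) + 1) * s ^ m * u' s + s ^ (m + 1) * u'' s)) (convex_Icc 0 r)
        (hF_cont.sub hG_cont) (fun s hs => ?_) (fun s hs => ?_)
      · rw [interior_Icc] at hs ⊢
        exact (hderiv s hs).hasDerivWithinAt
      · rw [interior_Icc] at hs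
        exact hnonneg s hs
    have h0r : (0:ℝ) ∈ Icc (0:ℝ) r := left_mem_Icc.2 hr.1.le
    have hrr : r ∈ Icc (0:ℝ) r := right_mem_Icc.2 hr.1.le
    have := hmono h0r hrr hr.1.le
    have hF0 : F 0 = 0 := intervalIntegral.integral_same
    have hG0 : G 0 = 0 := by simp [hG_def]
    simp only [hF0, hG0, sub_zero] at this
    linarith
  -- convert to the goal
  have hpow_pos : (0:ℝ) < r ^ (m + 1) := pow_pos hr.1 _
  have hzpow : r ^ (1 - ((m + 2 : ℕ) : ℤ)) = (r ^ (m + 1))⁻¹ := by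
    have : (1 - ((m + 2 : ℕ) : ℤ)) = -((m + 1 : ℕ) : ℤ) := by push_cast; ring
    rw [this, zpow_neg, zpow_natCast]
  have hN1 : m + 2 - 1 = m + 1 := rfl
  rw [hN1, hzpow, inv_mul_eq_div, le_div_iff₀ hpow_pos]
  rw [hG_def] at key
  simpa [mul_comm] using key
end

section
/- Let N ≥ 2. Let a : [0,1] → ℝ be continuously differentiable, nondecreasing, with a(0) > 0; let b : [0,1] → ℝ be continuous and nonpositive with (d/dr)(b(r)·r) > −1 − (N−1)/r² on (0,1); let f : [0,∞) → ℝ be continuously differentiable and nondecreasing with f(0) = 0 and f'(0) = 0. Then there exists a constant k₂ > 0 such that for every μ ∈ (0,1) and every nonnegative nondecreasing function u : [0,1] → ℝ, not identically zero, continuously differentiable on [0,1] and twice differentiable on (0,1), with u'(0) = u'(1) = 0 and −u''(r) + (b(r)·r − (N−1)/r)·u'(r) + u(r) = μ·a(r)·f(u(r)) on (0,1), one has ∫₀¹ (u'(r)² + u(r)²) r^{N−1} dr ≥ k₂². -/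
open Set Filter Topology MeasureTheory intervalIntegral

/-- Uniform lower `H¹` bound for nontrivial nonnegative nondecreasing radial
solutions of `-Δu + b(|x|) x·∇u + u = μ a(|x|) f(u)` with `μ ∈ (0,1)`. -/
theorem stmt_10 (N : ℕ) (hN : 2 ≤ N) (a b f : ℝ → ℝ)
    (ha_diff : ContDiffOn ℝ 1 a (Icc 0 1))
    (ha_mono : MonotoneOn a (Icc 0 1))
    (ha0 : 0 < a 0)
    (hb_cont : ContinuousOn b (Icc 0 1))
    (hb_nonpos : ∀ r ∈ Icc (0:ℝ) 1, b r ≤ 0)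
    (hrb_diff : ∀ r ∈ Ioo (0:ℝ) 1, DifferentiableAt ℝ (fun t => b t * t) r)
    (hrb : ∀ r ∈ Ioo (0:ℝ) 1,
      -1 - ((N : ℝ) - 1) / r ^ 2 < deriv (fun t => b t * t) r)
    (hf_diff : ContDiffOn ℝ 1 f (Ici 0))
    (hf_mono : MonotoneOn f (Ici 0))
    (hf0 : f 0 = 0)
    (hf'0 : derivWithin f (Ici 0) 0 = 0) :
    ∃ k₂ > (0:ℝ), ∀ μ ∈ Ioo (0:ℝ) 1, ∀ u u' u'' : ℝ → ℝ,
      (∀ r ∈ Icc (0:ℝ) 1, 0 ≤ u r) →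
      MonotoneOn u (Icc 0 1) →
      (∃ r ∈ Icc (0:ℝ) 1, u r ≠ 0) →
      (∀ r ∈ Icc (0:ℝ) 1, HasDerivWithinAt u (u' r) (Icc 0 1) r) →
      ContinuousOn u' (Icc 0 1) →
      (∀ r ∈ Ioo (0:ℝ) 1, HasDerivAt u' (u'' r) r) →
      u' 0 = 0 → u' 1 = 0 →
      (∀ r ∈ Ioo (0:ℝ) 1,
        -u'' r + (b r * r - ((N : ℝ) - 1) / r) * u' r + u r = μ * (a r * f (u r))) →
      k₂ ^ 2 ≤ ∫ r in (0:ℝ)..1, (u' r ^ 2 + u r ^ 2) * r ^ (N - 1) := by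
  have h01 : (0:ℝ) ∈ Icc (0:ℝ) 1 := ⟨le_refl 0, zero_le_one⟩
  have h11 : (1:ℝ) ∈ Icc (0:ℝ) 1 := ⟨zero_le_one, le_refl 1⟩
  have hA : 0 < a 1 := lt_of_lt_of_le ha0 (ha_mono h01 h11 zero_le_one)
  -- choice of δ using f(0) = f'(0) = 0
  obtain ⟨δ, hδpos, hδ⟩ : ∃ δ > (0:ℝ), ∀ s ∈ Icc (0:ℝ) δ, f s ≤ s / (2 * a 1) := by
    set C := 1 / (2 * a 1) with hC
    have hCpos : 0 < C := by positivity
    have hgc : ContinuousOn (derivWithin f (Ici 0)) (Ici 0) :=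
      hf_diff.continuousOn_derivWithin (uniqueDiffOn_Ici 0) le_rfl
    have hcw : ContinuousWithinAt (derivWithin f (Ici 0)) (Ici 0) 0 :=
      hgc 0 (self_mem_Ici)
    have hmem : {x | |derivWithin f (Ici 0) x| < C} ∈ 𝓝[Ici (0:ℝ)] 0 := by
      have : Ioo (-C) C ∈ 𝓝 (derivWithin f (Ici 0) 0) := by
        rw [hf'0]; exact Ioo_mem_nhds (by linarith) hCpos
      filter_upwards [hcw this] with x hx
      exact abs_lt.2 hx
    rw [Metric.mem_nhdsWithin_iff] at hmem
    obtain ⟨ε, hε, hsub⟩ := hmem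
    refine ⟨ε/2, by positivity, ?_⟩
    intro s hs
    have hIcc : Icc (0:ℝ) (ε/2) ⊆ Ici 0 := Icc_subset_Ici_self
    have hbound : ∀ x ∈ Ico (0:ℝ) (ε/2), ‖derivWithin f (Ici 0) x‖ ≤ C := by
      intro x hx
      have : x ∈ Metric.ball (0:ℝ) ε ∩ Ici 0 := by
        constructor
        · simp [Real.dist_eq, abs_of_nonneg hx.1]; linarith [hx.2]
        · exact hx.1
      exact (hsub this).le
    have hder : ∀ x ∈ Icc (0:ℝ) (ε/2),
        HasDerivWithinAt f (derivWithin f (Ici 0) x) (Icc 0 (ε/2)) x := by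
      intro x hx
      exact ((hf_diff.differentiableOn one_ne_zero x (hIcc hx)).hasDerivWithinAt).mono hIcc
    have := norm_image_sub_le_of_norm_deriv_le_segment' hder hbound s hs
    rw [hf0, sub_zero] at this
    have : f s ≤ C * (s - 0) := (le_abs_self _).trans (by simpa using this)
    rw [hC] at this
    calc f s ≤ 1 / (2 * a 1) * (s - 0) := this
      _ = s / (2 * a 1) := by ring
  refine ⟨δ / 2 ^ N, by positivity, ?_⟩
  rintro μ hμ u u' u'' hu0 humono ⟨r₁, hr₁, hur₁⟩ huD hu'c hu''D hu'0 hu'1 hODE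
  have hu_cont : ContinuousOn u (Icc 0 1) := fun r hr => (huD r hr).continuousWithinAt
  have hu1pos : 0 < u 1 := by
    have h1 : 0 < u r₁ := lt_of_le_of_ne (hu0 r₁ hr₁) (Ne.symm hur₁)
    exact lt_of_lt_of_le h1 (humono hr₁ h11 hr₁.2)
  -- main claim : δ < u 1
  have hδu1 : δ < u 1 := by
    by_contra hle
    push_neg at hle
    -- key pointwise inequality
    have hkey : ∀ r ∈ Icc (0:ℝ) 1, μ * (a r * f (u r)) ≤ u r / 2 := by
      intro r hr
      have hur0 := hu0 r hr
      have hur1 : u r ≤ u 1 := humono hr h11 hr.2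
      have hfle := hδ (u r) ⟨hur0, hur1.trans hle⟩
      have hfge : 0 ≤ f (u r) := by
        rw [← hf0]; exact hf_mono self_mem_Ici hur0 hur0
      have hale : a r ≤ a 1 := ha_mono hr h11 hr.2
      have hapos : 0 < a r := lt_of_lt_of_le ha0 (ha_mono h01 hr hr.1)
      have hμ0 : 0 < μ := hμ.1
      have hμ1 : μ < 1 := hμ.2
      have h1 : a r * f (u r) ≤ a 1 * (u r / (2 * a 1)) := by
        calc a r * f (u r) ≤ a 1 * f (u r) := by nlinarith
          _ ≤ a 1 * (u r / (2 * a 1)) := by nlinarith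
      have h2 : a 1 * (u r / (2 * a 1)) = u r / 2 := by field_simp
      nlinarith [mul_nonneg hapos.le hfge]
    -- primitive of b t * t
    have hbc : ContinuousOn (fun t => b t * t) (Icc 0 1) := hb_cont.mul continuousOn_id
    set B : ℝ → ℝ := fun r => ∫ t in (0:ℝ)..r, b t * t with hBdef
    have hBcont : ContinuousOn B (Icc 0 1) := by
      have := intervalIntegral.continuousOn_primitive_interval
        (μ := volume) (a := (0:ℝ)) (b := (1:ℝ)) (f := fun t => b t * t)
        (by rw [uIcc_of_le zero_le_one]; exact hbc.integrableOn_Icc)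
      rwa [uIcc_of_le zero_le_one] at this
    have hBD : ∀ r ∈ Ioo (0:ℝ) 1, HasDerivAt B (b r * r) r := by
      intro r hr
      have hmem : Icc (0:ℝ) 1 ∈ 𝓝 r := Icc_mem_nhds hr.1 hr.2
      have hca : ContinuousAt (fun t => b t * t) r := hbc.continuousAt hmem
      have hint : IntervalIntegrable (fun t => b t * t) volume 0 r := by
        apply ContinuousOn.intervalIntegrable
        apply hbc.mono
        rw [uIcc_of_le hr.1.le]
        exact Icc_subset_Icc le_rfl hr.2.le
      have hms : StronglyMeasurableAtFilter (fun t => b t * t) (nhds r) volume :=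
        ContinuousOn.stronglyMeasurableAtFilter isOpen_Ioo
          (hbc.mono Ioo_subset_Icc_self) r hr
      exact intervalIntegral.integral_hasDerivAt_right hint hms hca
    set E : ℝ → ℝ := fun r => Real.exp (-(B r)) with hEdef
    have hEcont : ContinuousOn E (Icc 0 1) := Real.continuous_exp.comp_continuousOn hBcont.neg
    set g : ℝ → ℝ := fun r => r ^ (N-1) * E r * (u r - μ * (a r * f (u r))) with hgdef
    set P : ℝ → ℝ := fun r => r ^ (N-1) * E r * u' r with hPdef
    have hfu_cont : ContinuousOn (fun r => f (u r)) (Icc 0 1) :=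
      hf_diff.continuousOn.comp hu_cont (fun r hr => hu0 r hr)
    have hg_cont : ContinuousOn g (Icc 0 1) := by
      apply ContinuousOn.mul
      · exact ((continuous_pow (N-1)).continuousOn).mul hEcont
      · exact hu_cont.sub (continuousOn_const.mul (ha_diff.continuousOn.mul hfu_cont))
    have hPcont : ContinuousOn P (Icc 0 1) :=
      (((continuous_pow (N-1)).continuousOn).mul hEcont).mul hu'c
    have hPD : ∀ r ∈ Ioo (0:ℝ) 1, HasDerivAt P (g r) r := by
      intro r hr
      have hr0 : (0:ℝ) < r := hr.1
      have hp : HasDerivAt (fun x : ℝ => x ^ (N-1)) (((N-1 : ℕ) : ℝ) * r ^ (N-2)) r := by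
        have := hasDerivAt_pow (N-1) r
        simpa [show N-1-1 = N-2 by omega] using this
      have hE' : HasDerivAt E (E r * -(b r * r)) r := (hBD r hr).neg.exp
      have h := (hp.mul hE').mul (hu''D r hr)
      have heq := hODE r hr
      refine h.congr_deriv (Eq.symm ?_)
      have hpow : r ^ (N-1) = r ^ (N-2) * r := by rw [← pow_succ]; congr 1; omega
      have hcast : ((N-1 : ℕ) : ℝ) = (N:ℝ) - 1 := by
        push_cast [Nat.cast_sub (by omega : 1 ≤ N)]; ring
      have hkey2 : u r - μ * (a r * f (u r)) = u'' r - (b r * r - ((N:ℝ)-1)/r) * u' r := by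
        linarith
      simp only [hgdef, Pi.mul_apply]
      rw [hkey2, hcast, hpow]
      field_simp
      ring
    have hg_int : IntervalIntegrable g volume 0 1 := by
      apply ContinuousOn.intervalIntegrable
      rwa [uIcc_of_le zero_le_one]
    have hFTC : ∫ r in (0:ℝ)..1, g r = P 1 - P 0 :=
      intervalIntegral.integral_eq_sub_of_hasDeriv_right_of_le zero_le_one hPcont
        (fun x hx => (hPD x hx).hasDerivWithinAt) hg_int
    have hP1 : P 1 = 0 := by simp [hPdef, hu'1]
    have hP0 : P 0 = 0 := by simp [hPdef, hu'0]
    -- find r₀ ∈ (0,1) with u r₀ > 0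
    obtain ⟨r₀, hr₀u, hr₀I⟩ : ∃ r₀, 0 < u r₀ ∧ r₀ ∈ Ioo (0:ℝ) 1 := by
      have hcw : ContinuousWithinAt u (Icc 0 1) 1 := hu_cont 1 h11
      have hmem : {r | 0 < u r} ∈ 𝓝[Icc (0:ℝ) 1] 1 := hcw (Ioi_mem_nhds hu1pos)
      have hmem2 : {r | 0 < u r} ∈ 𝓝[Ioo (0:ℝ) 1] 1 :=
        nhdsWithin_mono 1 Ioo_subset_Icc_self hmem
      have hne : (𝓝[Ioo (0:ℝ) 1] (1:ℝ)).NeBot := right_nhdsWithin_Ioo_neBot zero_lt_one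
      exact Filter.nonempty_of_mem (Filter.inter_mem hmem2 self_mem_nhdsWithin)
    have hgnn : ∀ r ∈ Icc (0:ℝ) 1, 0 ≤ g r := by
      intro r hr
      have h1 := hkey r hr
      have h2 := hu0 r hr
      have h3 : 0 ≤ u r - μ * (a r * f (u r)) := by linarith
      exact mul_nonneg (mul_nonneg (pow_nonneg hr.1 _) (Real.exp_pos _).le) h3
    have hg_int1 : IntervalIntegrable g volume 0 r₀ := by
      apply hg_int.mono_set
      rw [uIcc_of_le hr₀I.1.le, uIcc_of_le zero_le_one]
      exact Icc_subset_Icc le_rfl hr₀I.2.le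
    have hg_int2 : IntervalIntegrable g volume r₀ 1 := by
      apply hg_int.mono_set
      rw [uIcc_of_le hr₀I.2.le, uIcc_of_le zero_le_one]
      exact Icc_subset_Icc hr₀I.1.le le_rfl
    have hsplit : (∫ r in (0:ℝ)..r₀, g r) + (∫ r in r₀..1, g r) = ∫ r in (0:ℝ)..1, g r :=
      intervalIntegral.integral_add_adjacent_intervals hg_int1 hg_int2
    have hpos1 : 0 ≤ ∫ r in (0:ℝ)..r₀, g r := by
      apply intervalIntegral.integral_nonneg hr₀I.1.le
      intro x hx
      exact hgnn x ⟨hx.1, hx.2.trans hr₀I.2.le⟩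
    have hpos2 : 0 < ∫ r in r₀..1, g r := by
      apply intervalIntegral_pos_of_pos_on hg_int2 _ hr₀I.2
      intro x hx
      have hxI : x ∈ Icc (0:ℝ) 1 := ⟨(hr₀I.1.trans hx.1).le, hx.2.le⟩
      have hux : u r₀ ≤ u x := humono (Ioo_subset_Icc_self hr₀I) hxI hx.1.le
      have h1 := hkey x hxI
      have h3 : 0 < u x - μ * (a x * f (u x)) := by linarith
      exact mul_pos (mul_pos (pow_pos (hr₀I.1.trans hx.1) _) (Real.exp_pos _)) h3
    rw [hFTC, hP1, hP0] at hsplit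
    linarith
  -- final lower bound on the integral
  have hδ1 : (0:ℝ) ≤ δ := hδpos.le
  have hhalfI : Icc (1/2:ℝ) 1 ⊆ Icc (0:ℝ) 1 := Icc_subset_Icc (by norm_num) le_rfl
  have huu'_cont : ContinuousOn (fun r => 2 * u r * u' r) (Icc (1/2:ℝ) 1) :=
    ((continuousOn_const.mul (hu_cont.mono hhalfI)).mul (hu'c.mono hhalfI))
  have h2uu'_int : IntervalIntegrable (fun r => 2 * u r * u' r) volume (1/2) 1 := by
    apply ContinuousOn.intervalIntegrable
    rwa [uIcc_of_le (by norm_num : (1/2:ℝ) ≤ 1)]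
  have hsum_cont : ContinuousOn (fun r => u' r ^ 2 + u r ^ 2) (Icc (1/2:ℝ) 1) :=
    ((hu'c.mono hhalfI).pow 2).add ((hu_cont.mono hhalfI).pow 2)
  have hsum_int : IntervalIntegrable (fun r => u' r ^ 2 + u r ^ 2) volume (1/2) 1 := by
    apply ContinuousOn.intervalIntegrable
    rwa [uIcc_of_le (by norm_num : (1/2:ℝ) ≤ 1)]
  have hsq : ∫ r in (1/2:ℝ)..1, 2 * u r * u' r = u 1 ^ 2 - u (1/2) ^ 2 := by
    apply intervalIntegral.integral_eq_sub_of_hasDeriv_right_of_le (by norm_num)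
      ((hu_cont.mono hhalfI).pow 2) _ h2uu'_int
    intro x hx
    have hxI : x ∈ Icc (0:ℝ) 1 := ⟨by linarith [hx.1], hx.2.le⟩
    have hd : HasDerivAt u (u' x) x :=
      (huD x hxI).hasDerivAt (Icc_mem_nhds (by linarith [hx.1]) hx.2)
    have := (hd.pow 2).hasDerivWithinAt (s := Ioi x)
    simpa [mul_comm, mul_assoc, mul_left_comm] using this
  have h2le : (∫ r in (1/2:ℝ)..1, 2 * u r * u' r) ≤ ∫ r in (1/2:ℝ)..1, u' r ^ 2 + u r ^ 2 := by
    apply intervalIntegral.integral_mono_on (by norm_num) h2uu'_int hsum_int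
    intro x hx
    nlinarith [sq_nonneg (u x - u' x)]
  have hcase : δ^2/4 ≤ ∫ r in (1/2:ℝ)..1, u' r ^ 2 + u r ^ 2 := by
    rcases le_or_gt (u (1/2) ^ 2) (δ^2/2) with hc | hc
    · have hu1sq : δ^2 ≤ u 1 ^ 2 := by nlinarith
      rw [hsq] at h2le
      nlinarith [sq_nonneg δ]
    · have hconst : ∀ x ∈ Icc (1/2:ℝ) 1, δ^2/4 * 2 ≤ u' x ^ 2 + u x ^ 2 := by
        intro x hx
        have hxI : x ∈ Icc (0:ℝ) 1 := hhalfI hx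
        have h1 : u (1/2) ≤ u x := humono (hhalfI (left_mem_Icc.2 (by norm_num))) hxI hx.1
        have h2 : 0 ≤ u (1/2) := hu0 _ (hhalfI (left_mem_Icc.2 (by norm_num)))
        nlinarith [sq_nonneg (u' x)]
      have := intervalIntegral.integral_mono_on (by norm_num : (1/2:ℝ) ≤ 1)
        (intervalIntegrable_const) hsum_int hconst
      rw [intervalIntegral.integral_const] at this
      simp at this
      linarith
  -- weight bound on [1/2, 1]
  have hFcont : ContinuousOn (fun r => (u' r ^ 2 + u r ^ 2) * r ^ (N-1)) (Icc (0:ℝ) 1) :=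
    ((hu'c.pow 2).add (hu_cont.pow 2)).mul (continuous_pow (N-1)).continuousOn
  have hF_int : IntervalIntegrable (fun r => (u' r ^ 2 + u r ^ 2) * r ^ (N-1)) volume 0 1 := by
    apply ContinuousOn.intervalIntegrable
    rwa [uIcc_of_le zero_le_one]
  have hF_int1 : IntervalIntegrable (fun r => (u' r ^ 2 + u r ^ 2) * r ^ (N-1)) volume 0 (1/2) := by
    apply hF_int.mono_set
    rw [uIcc_of_le (by norm_num : (0:ℝ) ≤ 1/2), uIcc_of_le zero_le_one]
    exact Icc_subset_Icc le_rfl (by norm_num)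
  have hF_int2 : IntervalIntegrable (fun r => (u' r ^ 2 + u r ^ 2) * r ^ (N-1)) volume (1/2) 1 := by
    apply hF_int.mono_set
    rw [uIcc_of_le (by norm_num : (1/2:ℝ) ≤ 1), uIcc_of_le zero_le_one]
    exact Icc_subset_Icc (by norm_num) le_rfl
  have hsplitF : (∫ r in (0:ℝ)..(1/2), (u' r ^ 2 + u r ^ 2) * r ^ (N-1))
      + (∫ r in (1/2:ℝ)..1, (u' r ^ 2 + u r ^ 2) * r ^ (N-1))
      = ∫ r in (0:ℝ)..1, (u' r ^ 2 + u r ^ 2) * r ^ (N-1) :=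
    intervalIntegral.integral_add_adjacent_intervals hF_int1 hF_int2
  have hposF1 : 0 ≤ ∫ r in (0:ℝ)..(1/2), (u' r ^ 2 + u r ^ 2) * r ^ (N-1) := by
    apply intervalIntegral.integral_nonneg (by norm_num)
    intro x hx
    exact mul_nonneg (by positivity) (pow_nonneg hx.1 _)
  have hwt : ∀ x ∈ Icc (1/2:ℝ) 1,
      (1/2:ℝ)^(N-1) * (u' x ^ 2 + u x ^ 2) ≤ (u' x ^ 2 + u x ^ 2) * x ^ (N-1) := by
    intro x hx
    rw [mul_comm]
    exact mul_le_mul_of_nonneg_left (pow_le_pow_left₀ (by norm_num) hx.1 _) (by positivity)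
  have hscaled_int : IntervalIntegrable (fun r => (1/2:ℝ)^(N-1) * (u' r ^ 2 + u r ^ 2))
      volume (1/2) 1 := hsum_int.const_mul _
  have hwtInt : (1/2:ℝ)^(N-1) * ∫ r in (1/2:ℝ)..1, (u' r ^ 2 + u r ^ 2)
      ≤ ∫ r in (1/2:ℝ)..1, (u' r ^ 2 + u r ^ 2) * r ^ (N-1) := by
    rw [← intervalIntegral.integral_const_mul]
    exact intervalIntegral.integral_mono_on (by norm_num) hscaled_int hF_int2 hwt
  have hfinal1 : (1/2:ℝ)^(N-1) * (δ^2/4)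
      ≤ ∫ r in (0:ℝ)..1, (u' r ^ 2 + u r ^ 2) * r ^ (N-1) := by
    have h1 : (1/2:ℝ)^(N-1) * (δ^2/4) ≤ (1/2:ℝ)^(N-1) * ∫ r in (1/2:ℝ)..1, (u' r ^ 2 + u r ^ 2) :=
      mul_le_mul_of_nonneg_left hcase (by positivity)
    linarith
  refine le_trans ?_ hfinal1
  -- (δ / 2^N)^2 ≤ (1/2)^(N-1) * (δ^2/4)
  have hpow1 : ((2:ℝ)^N)^2 = 2^(2*N) := by rw [← pow_mul]; ring_nf
  have hpow2 : (1/2:ℝ)^(N-1) * (1/4) = 1 / 2^(N+1) := by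
    rw [div_pow, one_pow]
    rw [show (4:ℝ) = 2^2 by norm_num]
    rw [div_mul_div_comm, one_mul, ← pow_add]
    congr 2
    omega
  have hexp : (2:ℝ)^(N+1) ≤ (2:ℝ)^(2*N) := by
    apply pow_le_pow_right₀ one_le_two
    omega
  have h2Npos : (0:ℝ) < 2^(2*N) := by positivity
  have h1pos : (0:ℝ) < 2^(N+1) := by positivity
  rw [div_pow, hpow1]
  calc δ^2 / 2^(2*N) ≤ δ^2 / 2^(N+1) := by gcongr
    _ = (1/2:ℝ)^(N-1) * (δ^2/4) := by
        rw [show (1/2:ℝ)^(N-1) * (δ^2/4) = δ^2 * ((1/2:ℝ)^(N-1) * (1/4)) by ring, hpow2]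
        ring
end

section
/- Let N ≥ 2 and let f : [0,∞) → ℝ be continuously differentiable. Let λ₂ > 0 be a constant such that for every continuously differentiable v : [0,1] → ℝ with ∫₀¹ v(r) r^{N−1} dr = 0 one has λ₂ · ∫₀¹ v(r)² r^{N−1} dr ≤ ∫₀¹ (v'(r)² + v(r)²) r^{N−1} dr. Let u : [0,1] → ℝ be nonnegative, continuously differentiable on [0,1], twice differentiable on (0,1), with u'(0) = u'(1) = 0 and −u''(r) − ((N−1)/r)·u'(r) + u(r) = f(u(r)) for all r ∈ (0,1). If f'(s) < λ₂ for every s ∈ [0, sup_{[0,1]} u], then u is constant. -/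
open Set Topology Filter

private lemma mvt_aux {f : ℝ → ℝ} (hf : ContDiffOn ℝ 1 f (Ici 0)) {M μ : ℝ}
    (hμ : ∀ s ∈ Icc (0:ℝ) M, derivWithin f (Ici 0) s ≤ μ)
    {x y : ℝ} (hx : x ∈ Icc (0:ℝ) M) (hy : y ∈ Icc (0:ℝ) M) (hxy : y < x) :
    f x - f y ≤ μ * (x - y) := by
  have hsub : Icc y x ⊆ Ici (0:ℝ) := fun t ht => le_trans hy.1 ht.1
  have hcont : ContinuousOn f (Icc y x) := hf.continuousOn.mono hsub
  have hderiv : ∀ t ∈ Ioo y x, HasDerivAt f (derivWithin f (Ici 0) t) t := by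
    intro t ht
    have ht0 : (0:ℝ) < t := lt_of_le_of_lt hy.1 ht.1
    have hd : DifferentiableWithinAt ℝ f (Ici 0) t :=
      (hf.differentiableOn one_ne_zero) t ht0.le
    exact hd.hasDerivWithinAt.hasDerivAt (Ici_mem_nhds ht0)
  obtain ⟨ξ, hξ, hslope⟩ := exists_hasDerivAt_eq_slope f _ hxy hcont hderiv
  have hξmem : ξ ∈ Icc (0:ℝ) M := ⟨le_trans hy.1 hξ.1.le, le_trans hξ.2.le hx.2⟩
  have hle := hμ ξ hξmem
  rw [hslope] at hle
  have hxy' : (0:ℝ) < x - y := sub_pos.2 hxy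
  calc f x - f y = (f x - f y) / (x - y) * (x - y) := by field_simp
    _ ≤ μ * (x - y) := mul_le_mul_of_nonneg_right hle hxy'.le

private lemma mvt_aux2 {f : ℝ → ℝ} (hf : ContDiffOn ℝ 1 f (Ici 0)) {M μ : ℝ}
    (hμ : ∀ s ∈ Icc (0:ℝ) M, derivWithin f (Ici 0) s ≤ μ)
    {x y : ℝ} (hx : x ∈ Icc (0:ℝ) M) (hy : y ∈ Icc (0:ℝ) M) :
    (f x - f y) * (x - y) ≤ μ * (x - y)^2 := by
  rcases lt_trichotomy y x with h | h | h
  · have h1 := mvt_aux hf hμ hx hy h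
    nlinarith [sub_pos.2 h]
  · simp [h]
  · have h1 := mvt_aux hf hμ hy hx h
    nlinarith [sub_pos.2 h]


/-- If `f'` stays strictly below the second radial Neumann eigenvalue `λ₂`
(characterized by the Poincaré inequality for mean-zero radial functions) along the
range of `u`, then every nonnegative radial solution of `-Δu + u = f(u)` with Neumann
boundary conditions is constant. -/
theorem stmt_11 (N : ℕ) (hN : 2 ≤ N) (f : ℝ → ℝ)
    (hf_diff : ContDiffOn ℝ 1 f (Ici 0))
    (lam2 : ℝ) (hlam2 : 0 < lam2)
    (hpoincare : ∀ v v' : ℝ → ℝ,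
      (∀ r ∈ Icc (0:ℝ) 1, HasDerivWithinAt v (v' r) (Icc 0 1) r) →
      ContinuousOn v' (Icc 0 1) →
      (∫ r in (0:ℝ)..1, v r * r ^ (N - 1)) = 0 →
      lam2 * ∫ r in (0:ℝ)..1, v r ^ 2 * r ^ (N - 1) ≤
        ∫ r in (0:ℝ)..1, (v' r ^ 2 + v r ^ 2) * r ^ (N - 1))
    (u u' u'' : ℝ → ℝ)
    (hu_nonneg : ∀ r ∈ Icc (0:ℝ) 1, 0 ≤ u r)
    (hu : ∀ r ∈ Icc (0:ℝ) 1, HasDerivWithinAt u (u' r) (Icc 0 1) r)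
    (hu'_cont : ContinuousOn u' (Icc 0 1))
    (hu' : ∀ r ∈ Ioo (0:ℝ) 1, HasDerivAt u' (u'' r) r)
    (hu'0 : u' 0 = 0) (hu'1 : u' 1 = 0)
    (heq : ∀ r ∈ Ioo (0:ℝ) 1,
      -u'' r - ((N : ℝ) - 1) / r * u' r + u r = f (u r))
    (hf' : ∀ s ∈ Icc (0:ℝ) (sSup (u '' Icc (0:ℝ) 1)),
      derivWithin f (Ici 0) s < lam2) :
    ∀ r ∈ Icc (0:ℝ) 1, ∀ s ∈ Icc (0:ℝ) 1, u r = u s := by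
  obtain ⟨m, hm⟩ : ∃ m, N = m + 2 := ⟨N - 2, by omega⟩
  have hn : N - 1 = m + 1 := by omega
  have hNr : (N : ℝ) = (m : ℝ) + 2 := by rw [hm]; push_cast; ring
  -- continuity facts
  have hu_cont : ContinuousOn u (Icc 0 1) := fun r hr => (hu r hr).continuousWithinAt
  have hrn_cont : Continuous (fun r : ℝ => r ^ (N - 1)) := continuous_pow _
  have h01 : (0:ℝ) ≤ 1 := zero_le_one
  have hmem0 : (0:ℝ) ∈ Icc (0:ℝ) 1 := by constructor <;> norm_num
  -- the sup M
  set M := sSup (u '' Icc (0:ℝ) 1) with hM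
  have hbdd : BddAbove (u '' Icc (0:ℝ) 1) :=
    (isCompact_Icc.image_of_continuousOn hu_cont).bddAbove
  have huM : ∀ r ∈ Icc (0:ℝ) 1, u r ≤ M := fun r hr => le_csSup hbdd (mem_image_of_mem u hr)
  have hM0 : (0:ℝ) ≤ M := le_trans (hu_nonneg 0 hmem0) (huM 0 hmem0)
  -- the maximum μ of f' on [0, M]
  have hf'cont : ContinuousOn (derivWithin f (Ici 0)) (Ici (0:ℝ)) :=
    hf_diff.continuousOn_derivWithin (uniqueDiffOn_Ici 0) le_rfl
  obtain ⟨s₀, hs₀, hs₀max⟩ := isCompact_Icc.exists_isMaxOn (nonempty_Icc.2 hM0)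
    (hf'cont.mono Icc_subset_Ici_self)
  set μ := derivWithin f (Ici 0) s₀ with hμdef
  have hμlt : μ < lam2 := hf' s₀ hs₀
  have hμle : ∀ s ∈ Icc (0:ℝ) M, derivWithin f (Ici 0) s ≤ μ := fun s hs => hs₀max hs
  -- the weighted mean c and v = u - c
  have hint_u : IntervalIntegrable (fun r => u r * r ^ (N - 1)) MeasureTheory.volume 0 1 :=
    (hu_cont.mul hrn_cont.continuousOn).intervalIntegrable_of_Icc h01
  set c := (N : ℝ) * ∫ r in (0:ℝ)..1, u r * r ^ (N - 1) with hcdef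
  set v := fun r => u r - c with hvdef
  have hv_cont : ContinuousOn v (Icc 0 1) := hu_cont.sub continuousOn_const
  have hNpos : (0:ℝ) < N := by positivity
  have hrn_int : (∫ r in (0:ℝ)..1, r ^ (N - 1)) = 1 / N := by
    have hcast : ((N - 1 : ℕ) : ℝ) + 1 = (N : ℝ) := by rw [hn, hNr]; push_cast; ring
    rw [integral_pow, hcast, one_pow, zero_pow (by omega : N - 1 + 1 ≠ 0)]
    norm_num
  have hmean : (∫ r in (0:ℝ)..1, v r * r ^ (N - 1)) = 0 := by
    have hrw : (fun r : ℝ => v r * r ^ (N - 1))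
        = fun r => u r * r ^ (N - 1) - c * r ^ (N - 1) := by
      funext r; simp only [hvdef]; ring
    rw [hrw, intervalIntegral.integral_sub hint_u
        ((continuousOn_const.mul hrn_cont.continuousOn).intervalIntegrable_of_Icc h01 :
          IntervalIntegrable (fun r => c * r ^ (N - 1)) MeasureTheory.volume 0 1),
      intervalIntegral.integral_const_mul, hrn_int, hcdef]
    field_simp
    ring
  -- bounds for c
  have hc0 : 0 ≤ c := by
    apply mul_nonneg hNpos.le
    apply intervalIntegral.integral_nonneg h01
    intro r hr
    exact mul_nonneg (hu_nonneg r hr) (pow_nonneg hr.1 _)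
  have hcM : c ≤ M := by
    have h1 : (∫ r in (0:ℝ)..1, u r * r ^ (N - 1)) ≤ ∫ r in (0:ℝ)..1, M * r ^ (N - 1) := by
      apply intervalIntegral.integral_mono_on h01 hint_u
        ((continuousOn_const.mul hrn_cont.continuousOn).intervalIntegrable_of_Icc h01)
      intro r hr
      exact mul_le_mul_of_nonneg_right (huM r hr) (pow_nonneg hr.1 _)
    rw [intervalIntegral.integral_const_mul, hrn_int] at h1
    calc c ≤ (N:ℝ) * (M * (1 / N)) := mul_le_mul_of_nonneg_left h1 hNpos.le
      _ = M := by field_simp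
  have hcmem : c ∈ Icc (0:ℝ) M := ⟨hc0, hcM⟩
  have humem : ∀ r ∈ Icc (0:ℝ) 1, u r ∈ Icc (0:ℝ) M := fun r hr => ⟨hu_nonneg r hr, huM r hr⟩
  -- f ∘ u continuous
  have hfu_cont : ContinuousOn (fun r => f (u r)) (Icc 0 1) :=
    hf_diff.continuousOn.comp hu_cont (fun r hr => hu_nonneg r hr)
  -- auxiliary functions for integration by parts
  set F := fun r : ℝ => r ^ (N - 1) * u' r * v r with hFdef
  set G := fun r : ℝ => r ^ (N - 1) * ((u r - f (u r)) * v r + u' r ^ 2) with hGdef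
  have hG_cont : ContinuousOn G (Icc 0 1) :=
    hrn_cont.continuousOn.mul (((hu_cont.sub hfu_cont).mul hv_cont).add (hu'_cont.pow 2))
  have hF_cont : ContinuousOn F (Icc 0 1) :=
    (hrn_cont.continuousOn.mul hu'_cont).mul hv_cont
  have hFderiv : ∀ r ∈ Ioo (0:ℝ) 1, HasDerivAt F (G r) r := by
    intro r hr
    have hr0 : (0:ℝ) < r := hr.1
    have hrIcc : r ∈ Icc (0:ℝ) 1 := ⟨hr.1.le, hr.2.le⟩
    have hur : HasDerivAt u (u' r) r := (hu r hrIcc).hasDerivAt (Icc_mem_nhds hr.1 hr.2)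
    have hvr : HasDerivAt v (u' r) r := hur.sub_const c
    have hu'r : HasDerivAt u' (u'' r) r := hu' r hr
    have hpow : HasDerivAt (fun s : ℝ => s ^ (N - 1)) (((N - 1 : ℕ) : ℝ) * r ^ (N - 1 - 1)) r :=
      hasDerivAt_pow (N - 1) r
    have hprod := (hpow.mul hu'r).mul hvr
    convert hprod using 1
    case e'_4 => rfl
    case e'_5 => rfl
    case e'_8 => rfl
    have heqr := heq r hr
    have hu''r : u'' r = u r - f (u r) - ((N:ℝ) - 1) / r * u' r := by linarith
    rw [hGdef, hu''r]
    simp only [hn, Nat.add_sub_cancel, hNr, Pi.mul_apply]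
    push_cast
    field_simp
    ring
  have hG_int : IntervalIntegrable G MeasureTheory.volume 0 1 :=
    hG_cont.intervalIntegrable_of_Icc h01
  have hIG : (∫ r in (0:ℝ)..1, G r) = 0 := by
    rw [intervalIntegral.integral_eq_sub_of_hasDerivAt_of_le h01 hF_cont hFderiv hG_int]
    simp [hFdef, hu'1, zero_pow (show N - 1 ≠ 0 by omega)]
  -- integrability of the various integrands
  have hvrn_int : IntervalIntegrable (fun r => v r * r ^ (N - 1)) MeasureTheory.volume 0 1 :=
    (hv_cont.mul hrn_cont.continuousOn).intervalIntegrable_of_Icc h01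
  have hP_cont : ContinuousOn (fun r => (f (u r) - f c) * (v r * r ^ (N - 1))) (Icc 0 1) :=
    (hfu_cont.sub continuousOn_const).mul (hv_cont.mul hrn_cont.continuousOn)
  have hP_int : IntervalIntegrable (fun r => (f (u r) - f c) * (v r * r ^ (N - 1)))
      MeasureTheory.volume 0 1 := hP_cont.intervalIntegrable_of_Icc h01
  have hg_cont : ContinuousOn (fun r => v r ^ 2 * r ^ (N - 1)) (Icc 0 1) :=
    (hv_cont.pow 2).mul hrn_cont.continuousOn
  have hg_int : IntervalIntegrable (fun r => v r ^ 2 * r ^ (N - 1)) MeasureTheory.volume 0 1 :=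
    hg_cont.intervalIntegrable_of_Icc h01
  -- splitting the energy integral
  have hsplit : (∫ r in (0:ℝ)..1, (u' r ^ 2 + v r ^ 2) * r ^ (N - 1))
      = ∫ r in (0:ℝ)..1, (f (u r) - f c) * (v r * r ^ (N - 1)) := by
    have hrw : (fun r : ℝ => (u' r ^ 2 + v r ^ 2) * r ^ (N - 1))
        = fun r => G r + ((f (u r) - f c) * (v r * r ^ (N - 1))
            + (f c - c) * (v r * r ^ (N - 1))) := by
      funext r; simp only [hGdef, hvdef]; ring
    rw [hrw, intervalIntegral.integral_add hG_int (hP_int.add (hvrn_int.const_mul _)),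
      intervalIntegral.integral_add hP_int (hvrn_int.const_mul _),
      intervalIntegral.integral_const_mul, hmean, hIG]
    ring
  -- pointwise nonlinearity bound and its integral form
  have hpt : ∀ r ∈ Icc (0:ℝ) 1, (f (u r) - f c) * (v r * r ^ (N - 1))
      ≤ μ * (v r ^ 2 * r ^ (N - 1)) := by
    intro r hr
    have h2 : (f (u r) - f c) * (u r - c) ≤ μ * (u r - c) ^ 2 :=
      mvt_aux2 hf_diff hμle (humem r hr) hcmem
    have hrn : (0:ℝ) ≤ r ^ (N - 1) := pow_nonneg hr.1 _
    calc (f (u r) - f c) * (v r * r ^ (N - 1))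
        = ((f (u r) - f c) * (u r - c)) * r ^ (N - 1) := by simp only [hvdef]; ring
      _ ≤ (μ * (u r - c) ^ 2) * r ^ (N - 1) := mul_le_mul_of_nonneg_right h2 hrn
      _ = μ * (v r ^ 2 * r ^ (N - 1)) := by simp only [hvdef]; ring
  have hIP : (∫ r in (0:ℝ)..1, (f (u r) - f c) * (v r * r ^ (N - 1)))
      ≤ μ * ∫ r in (0:ℝ)..1, v r ^ 2 * r ^ (N - 1) := by
    rw [← intervalIntegral.integral_const_mul]
    exact intervalIntegral.integral_mono_on h01 hP_int (hg_int.const_mul μ) hpt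
  -- Poincaré inequality applied to v
  have hpoin := hpoincare v u' (fun r hr => (hu r hr).sub_const c) hu'_cont hmean
  have hI0 : 0 ≤ ∫ r in (0:ℝ)..1, v r ^ 2 * r ^ (N - 1) :=
    intervalIntegral.integral_nonneg h01
      (fun r hr => mul_nonneg (sq_nonneg _) (pow_nonneg hr.1 _))
  have hIzero : (∫ r in (0:ℝ)..1, v r ^ 2 * r ^ (N - 1)) = 0 := by
    rw [hsplit] at hpoin
    nlinarith [hpoin, hIP, hI0, hμlt]
  -- v vanishes on the open interval
  have hvIoo : ∀ b ∈ Ioo (0:ℝ) 1, v b = 0 := by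
    intro b hb
    by_contra hvb
    have hgb : 0 < v b ^ 2 * b ^ (N - 1) :=
      mul_pos (lt_of_le_of_ne (sq_nonneg _) (Ne.symm (pow_ne_zero 2 hvb))) (pow_pos hb.1 _)
    have hgc : ContinuousAt (fun r => v r ^ 2 * r ^ (N - 1)) b :=
      hg_cont.continuousAt (Icc_mem_nhds hb.1 hb.2)
    have hmemnhds : {x : ℝ | 0 < v x ^ 2 * x ^ (N - 1)} ∩ Ioo 0 1 ∈ 𝓝 b :=
      Filter.inter_mem (hgc (isOpen_Ioi.mem_nhds hgb)) (Ioo_mem_nhds hb.1 hb.2)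
    obtain ⟨ε, hε, hball⟩ := Metric.mem_nhds_iff.1 hmemnhds
    have hsub : Icc (b - ε/2) (b + ε/2) ⊆ {x : ℝ | 0 < v x ^ 2 * x ^ (N - 1)} ∩ Ioo 0 1 := by
      rw [← Real.closedBall_eq_Icc]
      exact (Metric.closedBall_subset_ball (by linarith)).trans hball
    set p := b - ε/2 with hpdef
    set q := b + ε/2 with hqdef
    have hpq : p < q := by rw [hpdef, hqdef]; linarith
    have hpmem := hsub ⟨le_refl p, by rw [hpdef, hqdef]; linarith⟩
    have hqmem := hsub ⟨by rw [hpdef, hqdef]; linarith, le_refl q⟩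
    have hp01 : p ∈ Icc (0:ℝ) 1 := Ioo_subset_Icc_self hpmem.2
    have hq01 : q ∈ Icc (0:ℝ) 1 := Ioo_subset_Icc_self hqmem.2
    have hint_pq : IntervalIntegrable (fun r => v r ^ 2 * r ^ (N - 1))
        MeasureTheory.volume p q :=
      hg_int.mono_set (by rw [uIcc_of_le hpq.le, uIcc_of_le h01]
                          exact Icc_subset_Icc hp01.1 hq01.2)
    have hint_0p : IntervalIntegrable (fun r => v r ^ 2 * r ^ (N - 1))
        MeasureTheory.volume 0 p :=
      hg_int.mono_set (by rw [uIcc_of_le hp01.1, uIcc_of_le h01]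
                          exact Icc_subset_Icc le_rfl hp01.2)
    have hint_q1 : IntervalIntegrable (fun r => v r ^ 2 * r ^ (N - 1))
        MeasureTheory.volume q 1 :=
      hg_int.mono_set (by rw [uIcc_of_le hq01.2, uIcc_of_le h01]
                          exact Icc_subset_Icc hq01.1 le_rfl)
    have hmid : 0 < ∫ r in p..q, v r ^ 2 * r ^ (N - 1) :=
      intervalIntegral.intervalIntegral_pos_of_pos_on hint_pq
        (fun x hx => (hsub ⟨hx.1.le, hx.2.le⟩).1) hpq
    have h0p : 0 ≤ ∫ r in (0:ℝ)..p, v r ^ 2 * r ^ (N - 1) :=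
      intervalIntegral.integral_nonneg hp01.1
        (fun x hx => mul_nonneg (sq_nonneg _) (pow_nonneg hx.1 _))
    have hq1 : 0 ≤ ∫ r in q..1, v r ^ 2 * r ^ (N - 1) :=
      intervalIntegral.integral_nonneg hq01.2
        (fun x hx => mul_nonneg (sq_nonneg _) (pow_nonneg (le_trans hq01.1 hx.1) _))
    have hadd1 : (∫ r in (0:ℝ)..p, v r ^ 2 * r ^ (N - 1))
        + (∫ r in p..q, v r ^ 2 * r ^ (N - 1))
        = ∫ r in (0:ℝ)..q, v r ^ 2 * r ^ (N - 1) :=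
      intervalIntegral.integral_add_adjacent_intervals hint_0p hint_pq
    have hadd2 : (∫ r in (0:ℝ)..q, v r ^ 2 * r ^ (N - 1))
        + (∫ r in q..1, v r ^ 2 * r ^ (N - 1))
        = ∫ r in (0:ℝ)..1, v r ^ 2 * r ^ (N - 1) :=
      intervalIntegral.integral_add_adjacent_intervals
        (hint_0p.trans hint_pq) hint_q1
    linarith
  -- v vanishes on the closed interval by continuity
  have hvIcc : ∀ b ∈ Icc (0:ℝ) 1, v b = 0 := by
    intro b hb
    have hclos : b ∈ closure (Ioo (0:ℝ) 1) := by
      rw [closure_Ioo (by norm_num : (0:ℝ) ≠ 1)]; exact hb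
    have hNB : (𝓝[Ioo (0:ℝ) 1] b).NeBot := mem_closure_iff_nhdsWithin_neBot.1 hclos
    have h1 : Filter.Tendsto v (𝓝[Ioo (0:ℝ) 1] b) (𝓝 (v b)) :=
      (hv_cont b hb).mono_left (nhdsWithin_mono _ Ioo_subset_Icc_self)
    have h2 : Filter.Tendsto v (𝓝[Ioo (0:ℝ) 1] b) (𝓝 0) := by
      refine Filter.Tendsto.congr' ?_ tendsto_const_nhds
      filter_upwards [self_mem_nhdsWithin] with x hx
      exact (hvIoo x hx).symm
    exact tendsto_nhds_unique h1 h2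
  intro r hr s hs
  have h1 := hvIcc r hr
  have h2 := hvIcc s hs
  simp only [hvdef] at h1 h2
  linarith
end

section
/- Let f : [0,∞) → ℝ be continuously differentiable and nondecreasing with f(0) = 0 and f'(0) = 0. Let M > 0, δ > 0 be such that f(s) ≥ (1+δ)·s for all s ≥ M, let s₀ > M and let p > 1. Then there exists a continuously differentiable nondecreasing function f̃ : [0,∞) → ℝ such that: (i) f̃(s) = f(s) for all s ∈ [0, s₀]; (ii) f̃(s) ≥ (1+δ)·s for all s ≥ M; and (iii) lim_{s→∞} f̃(s)/s^p = 1. -/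
open Set Filter
open scoped Topology

/-- Construction of the truncated nonlinearity: `f̃` agrees with `f` on `[0, s₀]`,
keeps the superlinear lower bound `(1+δ)s` above `M`, and has exact power growth
`s^p` at infinity. -/
theorem stmt_12 (f : ℝ → ℝ)
    (hf_diff : ContDiffOn ℝ 1 f (Ici 0))
    (hf_mono : MonotoneOn f (Ici 0))
    (hf0 : f 0 = 0)
    (hf'0 : derivWithin f (Ici 0) 0 = 0)
    (M δ : ℝ) (hM : 0 < M) (hδ : 0 < δ)
    (hfM : ∀ s : ℝ, M ≤ s → (1 + δ) * s ≤ f s)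
    (s0 : ℝ) (hs0 : M < s0) (p : ℝ) (hp : 1 < p) :
    ∃ ftil : ℝ → ℝ,
      ContDiffOn ℝ 1 ftil (Ici 0) ∧
      MonotoneOn ftil (Ici 0) ∧
      (∀ s ∈ Icc (0:ℝ) s0, ftil s = f s) ∧
      (∀ s : ℝ, M ≤ s → (1 + δ) * s ≤ ftil s) ∧
      Filter.Tendsto (fun s : ℝ => ftil s / s ^ p) Filter.atTop (nhds 1) := by
  have hs0pos : (0:ℝ) < s0 := hM.trans hs0
  set q : ℝ := (p + 1) / 2 with hqdef
  have hq1 : (1:ℝ) < q := by rw [hqdef]; linarith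
  have hq0 : (0:ℝ) < q := by linarith
  have hqp : q < p := by rw [hqdef]; linarith
  have hp0 : (0:ℝ) < p := by linarith
  have hmem : Ici (0:ℝ) ∈ 𝓝 s0 := Ici_mem_nhds hs0pos
  have hfd : DifferentiableAt ℝ f s0 :=
    (hf_diff.contDiffAt hmem).differentiableAt one_ne_zero
  set b : ℝ := deriv f s0 with hbdef
  have hb : HasDerivAt f b s0 := hfd.hasDerivAt
  -- b is nonnegative since f is monotone
  have hbnn : 0 ≤ b := by
    have h1 : HasDerivWithinAt f b (Ioi s0) s0 := hb.hasDerivWithinAt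
    have h2 := hasDerivWithinAt_iff_tendsto_slope.1 h1
    have h3 : Ioi s0 \ {s0} = Ioi s0 := Set.diff_singleton_eq_self (by simp)
    rw [h3] at h2
    refine ge_of_tendsto h2 ?_
    filter_upwards [self_mem_nhdsWithin] with t ht
    have hts : s0 < t := ht
    have hfle : f s0 ≤ f t := hf_mono (le_of_lt hs0pos) (by
      exact le_of_lt (lt_trans hs0pos hts)) hts.le
    rw [slope_def_field]
    exact div_nonneg (by linarith) (by linarith)
  have hfs0 : (1 + δ) * s0 ≤ f s0 := hfM s0 hs0.le
  -- if b < 1+δ then f s0 > (1+δ) s0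
  have hcb : b < 1 + δ → (1 + δ) * s0 < f s0 := by
    intro hblt
    rcases lt_or_eq_of_le hfs0 with h | h
    · exact h
    · exfalso
      have hg : HasDerivAt (fun s => f s - (1 + δ) * s) (b - (1 + δ)) s0 := by
        have := (hb.sub ((hasDerivAt_id s0).const_mul (1 + δ)) :
          HasDerivAt (fun s => f s - (1 + δ) * s) (b - (1 + δ) * 1) s0)
        rwa [mul_one] at this
      have hmin : IsLocalMin (fun s => f s - (1 + δ) * s) s0 := by
        have : ∀ᶠ t in 𝓝 s0, f s0 - (1 + δ) * s0 ≤ f t - (1 + δ) * t := by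
          filter_upwards [Ioi_mem_nhds hs0] with t ht
          have h2 := hfM t (le_of_lt ht)
          linarith
        exact this
      have hz := hmin.deriv_eq_zero
      rw [hg.deriv] at hz
      linarith
  -- choose the coefficient A of the intermediate power
  obtain ⟨A, hAnn, hA⟩ : ∃ A : ℝ, 0 ≤ A ∧ ∀ h : ℝ, 0 ≤ h →
      (1 + δ) * h ≤ (f s0 - (1 + δ) * s0) + b * h + A * h ^ q + h ^ p := by
    rcases le_or_gt (1 + δ) b with hble | hblt
    · refine ⟨0, le_rfl, fun h hh => ?_⟩
      have h1 : 0 ≤ h ^ p := Real.rpow_nonneg hh p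
      have h2 : (1 + δ) * h ≤ b * h := mul_le_mul_of_nonneg_right hble hh
      nlinarith
    · have hcpos : 0 < f s0 - (1 + δ) * s0 := by linarith [hcb hblt]
      set c : ℝ := f s0 - (1 + δ) * s0 with hcdef
      set ε : ℝ := (1 + δ) - b with hεdef
      have hεpos : 0 < ε := by rw [hεdef]; linarith
      refine ⟨ε * (ε / c) ^ (q - 1), by positivity, fun h hh => ?_⟩
      have hqnn : 0 ≤ q - 1 := by linarith
      have hpnn : 0 ≤ h ^ p := Real.rpow_nonneg hh p
      rcases le_or_gt h (c / ε) with hsmall | hbig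
      · have h1 : ε * h ≤ c := by
          rw [le_div_iff₀ hεpos] at hsmall
          linarith [hsmall]
        have h3 : 0 ≤ ε * (ε / c) ^ (q - 1) * h ^ q := by positivity
        have : (1 + δ) * h = b * h + ε * h := by rw [hεdef]; ring
        linarith
      · have hhpos : 0 < h := lt_trans (div_pos hcpos hεpos) hbig
        have e1 : h ^ q = h ^ (q - 1) * h := by
          conv_lhs => rw [show q = q - 1 + 1 by ring]
          rw [Real.rpow_add hhpos, Real.rpow_one]
        have e2 : (c / ε) ^ (q - 1) ≤ h ^ (q - 1) :=
          Real.rpow_le_rpow (le_of_lt (div_pos hcpos hεpos)) hbig.le hqnn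
        have e3 : (ε / c) ^ (q - 1) * (c / ε) ^ (q - 1) = 1 := by
          rw [← Real.mul_rpow (by positivity) (by positivity)]
          rw [show ε / c * (c / ε) = 1 by field_simp]
          exact Real.one_rpow _
        have key : ε * h ≤ ε * (ε / c) ^ (q - 1) * h ^ q := by
          rw [e1]
          have h4 : (ε / c) ^ (q - 1) * (c / ε) ^ (q - 1) ≤ (ε / c) ^ (q - 1) * h ^ (q - 1) :=
            mul_le_mul_of_nonneg_left e2 (by positivity)
          rw [e3] at h4
          calc ε * h = ε * 1 * h := by ring
            _ ≤ ε * ((ε / c) ^ (q - 1) * h ^ (q - 1)) * h := by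
                have := mul_le_mul_of_nonneg_left h4 hεpos.le
                exact mul_le_mul_of_nonneg_right (by linarith [this]) hhpos.le
            _ = ε * (ε / c) ^ (q - 1) * (h ^ (q - 1) * h) := by ring
        have : (1 + δ) * h = b * h + ε * h := by rw [hεdef]; ring
        linarith
  -- the tail function and the glued function
  set T : ℝ → ℝ := fun s => f s0 + b * (s - s0) + A * (s - s0) ^ q + (s - s0) ^ p with hT
  set ftil : ℝ → ℝ := fun s => if s ≤ s0 then f s else T s with hftil
  have hq_ne : q ≠ 0 := ne_of_gt hq0
  have hp_ne : p ≠ 0 := ne_of_gt hp0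
  have hTs0 : T s0 = f s0 := by
    simp [hT, Real.zero_rpow hq_ne, Real.zero_rpow hp_ne]
  have htail : ∀ s, s0 ≤ s → ftil s = T s := by
    intro s hs
    rcases eq_or_lt_of_le hs with h | h
    · rw [hftil]; simp only [← h, le_refl, if_pos]; exact hTs0.symm
    · rw [hftil]; simp only [if_neg (not_le.2 h)]
  have hagree : ∀ s ∈ Icc (0:ℝ) s0, ftil s = f s := by
    intro s hs
    rw [hftil]; simp only [if_pos hs.2]
  -- derivative of the tail
  set G' : ℝ → ℝ := fun s => b + A * (q * (s - s0) ^ (q - 1)) + p * (s - s0) ^ (p - 1) with hG'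
  have hTderiv : ∀ s : ℝ, HasDerivAt T (G' s) s := by
    intro s
    have h1 : HasDerivAt (fun t : ℝ => t - s0) 1 s := (hasDerivAt_id s).sub_const s0
    have h2 : HasDerivAt (fun x : ℝ => x ^ q) (q * (s - s0) ^ (q - 1)) (s - s0) :=
      Real.hasDerivAt_rpow_const (Or.inr hq1.le)
    have h3 : HasDerivAt (fun x : ℝ => x ^ p) (p * (s - s0) ^ (p - 1)) (s - s0) :=
      Real.hasDerivAt_rpow_const (Or.inr hp.le)
    have h2' := h2.comp s h1
    have h3' := h3.comp s h1
    have h4 : HasDerivAt T (0 + b * 1 + A * (q * (s - s0) ^ (q - 1) * 1)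
        + p * (s - s0) ^ (p - 1) * 1) s := by
      exact (((hasDerivAt_const s (f s0)).add (h1.const_mul b)).add
        (h2'.const_mul A)).add h3'
    convert h4 using 1
    rw [hG']; ring
  have hG's0 : G' s0 = b := by
    have : q - 1 ≠ 0 := by intro h; apply hq_ne; linarith [sub_eq_zero.1 h]
    have hp1 : p - 1 ≠ 0 := by intro h; exact (by linarith : (1:ℝ) < p).ne' (by linarith [sub_eq_zero.1 h])
    simp [hG', Real.zero_rpow this, Real.zero_rpow hp1]
  have hG'cont : Continuous G' := by
    have hc1 : Continuous fun s : ℝ => (s - s0) ^ (q - 1) := by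
      rw [continuous_iff_continuousAt]
      intro x
      exact (Real.continuousAt_rpow_const _ _ (Or.inr (by linarith))).comp
        ((continuous_id.sub continuous_const).continuousAt)
    have hc2 : Continuous fun s : ℝ => (s - s0) ^ (p - 1) := by
      rw [continuous_iff_continuousAt]
      intro x
      exact (Real.continuousAt_rpow_const _ _ (Or.inr (by linarith))).comp
        ((continuous_id.sub continuous_const).continuousAt)
    rw [hG']
    exact (continuous_const.add (continuous_const.mul (continuous_const.mul hc1))).add
      (continuous_const.mul hc2)
  -- candidate derivative of ftil
  set D : ℝ → ℝ := fun s => if s ≤ s0 then derivWithin f (Ici 0) s else G' s with hD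
  have hDs0 : D s0 = b := by
    rw [hD]; simp only [le_refl, if_pos]
    rw [derivWithin_of_mem_nhds hmem]
  have hHasD : ∀ s ∈ Ici (0:ℝ), HasDerivWithinAt ftil (D s) (Ici 0) s := by
    intro s hs
    rcases lt_trichotomy s s0 with hlt | heq | hgt
    · have hfd' : HasDerivWithinAt f (derivWithin f (Ici 0) s) (Ici 0) s :=
        (hf_diff.differentiableOn one_ne_zero s hs).hasDerivWithinAt
      have hDs : D s = derivWithin f (Ici 0) s := by rw [hD]; simp only [if_pos hlt.le]
      rw [hDs]
      refine hfd'.congr_of_eventuallyEq ?_ ?_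
      · filter_upwards [mem_nhdsWithin_of_mem_nhds (Iic_mem_nhds hlt)] with t ht
        rw [hftil]; simp only [if_pos (mem_Iic.1 ht)]
      · rw [hftil]; simp only [if_pos hlt.le]
    · subst heq
      rw [hDs0]
      have hleft : HasDerivWithinAt ftil b (Iic s) s := by
        refine (hb.hasDerivWithinAt).congr ?_ ?_
        · intro t ht; rw [hftil]; simp only [if_pos (mem_Iic.1 ht)]
        · rw [hftil]; simp only [le_refl, if_pos]
      have hright : HasDerivWithinAt ftil b (Ici s) s := by
        have := (hTderiv s).hasDerivWithinAt (s := Ici s)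
        rw [hG's0] at this
        refine this.congr ?_ ?_
        · intro t ht; exact htail t (mem_Ici.1 ht)
        · exact htail s le_rfl
      have := hleft.union hright
      rw [Iic_union_Ici] at this
      exact (this.mono (subset_univ _))
    · have hDs : D s = G' s := by rw [hD]; simp only [if_neg (not_le.2 hgt)]
      rw [hDs]
      refine ((hTderiv s).hasDerivWithinAt).congr_of_eventuallyEq ?_ ?_
      · filter_upwards [mem_nhdsWithin_of_mem_nhds (Ioi_mem_nhds hgt)] with t ht
        exact htail t (le_of_lt ht)
      · exact htail s hgt.le
  have hdiff : DifferentiableOn ℝ ftil (Ici 0) :=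
    fun s hs => (hHasD s hs).differentiableWithinAt
  have hderiv_eq : ∀ s ∈ Ici (0:ℝ), derivWithin ftil (Ici 0) s = D s :=
    fun s hs => (hHasD s hs).derivWithin (uniqueDiffOn_Ici 0 s hs)
  have hF'cont : ContinuousOn (derivWithin f (Ici 0)) (Ici 0) :=
    hf_diff.continuousOn_derivWithin (uniqueDiffOn_Ici 0) le_rfl
  have hDcont : ContinuousOn D (Ici 0) := by
    intro s hs
    rcases lt_trichotomy s s0 with hlt | heq | hgt
    · refine ((hF'cont s hs).congr_of_eventuallyEq ?_ ?_ : ContinuousWithinAt D (Ici 0) s)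
      · filter_upwards [mem_nhdsWithin_of_mem_nhds (Iic_mem_nhds hlt)] with t ht
        rw [hD]; simp only [if_pos (mem_Iic.1 ht)]
      · rw [hD]; simp only [if_pos hlt.le]
    · subst heq
      have hsplit : Ici (0:ℝ) ⊆ (Ici 0 ∩ Iic s) ∪ Ioi s := by
        intro t ht
        rcases le_or_gt t s with h | h
        · exact Or.inl ⟨ht, h⟩
        · exact Or.inr h
      rw [ContinuousWithinAt, hDs0]
      refine Filter.Tendsto.mono_left ?_ (nhdsWithin_mono s hsplit)
      rw [nhdsWithin_union]
      rw [tendsto_sup]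
      constructor
      · have h1 : Tendsto (derivWithin f (Ici 0)) (𝓝[Ici 0 ∩ Iic s] s) (𝓝 b) := by
          have := hF'cont s hs
          rw [ContinuousWithinAt] at this
          have h2 := this.mono_left (nhdsWithin_mono s (fun u (hu : u ∈ Ici (0:ℝ) ∩ Iic s) => hu.1))
          rwa [show derivWithin f (Ici 0) s = b from by rw [derivWithin_of_mem_nhds hmem]] at h2
        refine h1.congr' ?_
        filter_upwards [self_mem_nhdsWithin] with t ht
        rw [hD]; simp only [if_pos (mem_Iic.1 ht.2)]
      · have h1 : Tendsto G' (𝓝[Ioi s] s) (𝓝 b) := by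
          have := hG'cont.continuousAt (x := s)
          rw [ContinuousAt, hG's0] at this
          exact this.mono_left nhdsWithin_le_nhds
        refine h1.congr' ?_
        filter_upwards [self_mem_nhdsWithin] with t ht
        rw [hD]; simp only [if_neg (not_le.2 (mem_Ioi.1 ht))]
    · refine ((hG'cont.continuousAt.continuousWithinAt).congr_of_eventuallyEq ?_ ?_ :
        ContinuousWithinAt D (Ici 0) s)
      · filter_upwards [mem_nhdsWithin_of_mem_nhds (Ioi_mem_nhds hgt)] with t ht
        rw [hD]; simp only [if_neg (not_le.2 (mem_Ioi.1 ht))]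
      · rw [hD]; simp only [if_neg (not_le.2 hgt)]
  have hcont1 : ContDiffOn ℝ 1 ftil (Ici 0) := by
    have : ContDiffOn ℝ (0 + 1) ftil (Ici 0) := by
      rw [contDiffOn_succ_iff_derivWithin (uniqueDiffOn_Ici 0)]
      refine ⟨hdiff, by simp, ?_⟩
      rw [contDiffOn_zero]
      exact hDcont.congr hderiv_eq
    simpa using this
  -- monotonicity
  have hmono : MonotoneOn ftil (Ici 0) := by
    intro x hx y hy hxy
    rcases le_total y s0 with h1 | h1
    · rw [hagree x ⟨hx, hxy.trans h1⟩, hagree y ⟨hy, h1⟩]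
      exact hf_mono hx hy hxy
    · rcases le_total x s0 with h2 | h2
      · rw [hagree x ⟨hx, h2⟩, htail y h1]
        have hxf : f x ≤ f s0 := hf_mono hx (le_of_lt hs0pos) h2
        have e1 : 0 ≤ b * (y - s0) := mul_nonneg hbnn (by linarith)
        have e2 : 0 ≤ A * (y - s0) ^ q := mul_nonneg hAnn (Real.rpow_nonneg (by linarith) q)
        have e3 : 0 ≤ (y - s0) ^ p := Real.rpow_nonneg (by linarith) p
        rw [hT]
        simp only
        linarith
      · rw [htail x h2, htail y h1]
        have m1 : b * (x - s0) ≤ b * (y - s0) := mul_le_mul_of_nonneg_left (by linarith) hbnn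
        have m2 : (x - s0) ^ q ≤ (y - s0) ^ q :=
          Real.rpow_le_rpow (by linarith) (by linarith) hq0.le
        have m3 : (x - s0) ^ p ≤ (y - s0) ^ p :=
          Real.rpow_le_rpow (by linarith) (by linarith) hp0.le
        have m2' : A * (x - s0) ^ q ≤ A * (y - s0) ^ q := mul_le_mul_of_nonneg_left m2 hAnn
        rw [hT]
        simp only
        linarith
  -- lower bound
  have hlow : ∀ s : ℝ, M ≤ s → (1 + δ) * s ≤ ftil s := by
    intro s hsM
    rcases le_or_gt s s0 with h | h
    · rw [hagree s ⟨by linarith, h⟩]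
      exact hfM s hsM
    · rw [htail s h.le]
      have := hA (s - s0) (by linarith)
      have hexp : (1 + δ) * (s - s0) = (1 + δ) * s - (1 + δ) * s0 := by ring
      rw [hT]
      simp only
      linarith
  -- the limit
  have htend : Tendsto (fun s : ℝ => ftil s / s ^ p) atTop (𝓝 1) := by
    have hratio : Tendsto (fun s : ℝ => (s - s0) / s) atTop (𝓝 1) := by
      have h1 : Tendsto (fun s : ℝ => 1 - s0 * s⁻¹) atTop (𝓝 (1 - s0 * 0)) :=
        tendsto_const_nhds.sub (tendsto_inv_atTop_zero.const_mul s0)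
      rw [show (1:ℝ) - s0 * 0 = 1 by ring] at h1
      refine h1.congr' ?_
      filter_upwards [eventually_gt_atTop (0:ℝ)] with s hspos
      field_simp
    have hpow : ∀ r : ℝ, 0 < r →
        Tendsto (fun s : ℝ => ((s - s0) / s) ^ r) atTop (𝓝 1) := by
      intro r hr
      have hc : ContinuousAt (fun x : ℝ => x ^ r) 1 :=
        Real.continuousAt_rpow_const 1 r (Or.inl one_ne_zero)
      have := (hc.tendsto).comp hratio
      rwa [Real.one_rpow] at this
    have hinv : Tendsto (fun s : ℝ => (s ^ p)⁻¹) atTop (𝓝 0) :=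
      (tendsto_rpow_atTop hp0).inv_tendsto_atTop
    have t1 : Tendsto (fun s : ℝ => f s0 * (s ^ p)⁻¹) atTop (𝓝 0) := by
      have := hinv.const_mul (f s0)
      simpa using this
    have t2 : Tendsto (fun s : ℝ => b * ((s - s0) / s ^ p)) atTop (𝓝 0) := by
      have hlin : Tendsto (fun s : ℝ => ((s - s0) / s) * s ^ (1 - p)) atTop (𝓝 (1 * 0)) := by
        refine hratio.mul ?_
        have := tendsto_rpow_neg_atTop (y := p - 1) (by linarith)
        rw [show -(p - 1) = 1 - p by ring] at this
        exact this
      rw [show (1:ℝ) * 0 = 0 by ring] at hlin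
      have heq : ∀ᶠ s : ℝ in atTop, ((s - s0) / s) * s ^ (1 - p) = (s - s0) / s ^ p := by
        filter_upwards [eventually_gt_atTop (0:ℝ)] with s hspos
        rw [Real.rpow_sub hspos, Real.rpow_one]
        have hsp : (0:ℝ) < s ^ p := Real.rpow_pos_of_pos hspos p
        field_simp
      have := (hlin.congr' heq).const_mul b
      simpa using this
    have t3 : Tendsto (fun s : ℝ => A * ((s - s0) ^ q / s ^ p)) atTop (𝓝 0) := by
      have hcore : Tendsto (fun s : ℝ => ((s - s0) / s) ^ q * s ^ (q - p)) atTop (𝓝 (1 * 0)) := by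
        refine (hpow q hq0).mul ?_
        have := tendsto_rpow_neg_atTop (y := p - q) (by linarith)
        rw [show -(p - q) = q - p by ring] at this
        exact this
      rw [show (1:ℝ) * 0 = 0 by ring] at hcore
      have heq : ∀ᶠ s : ℝ in atTop, ((s - s0) / s) ^ q * s ^ (q - p) = (s - s0) ^ q / s ^ p := by
        filter_upwards [eventually_gt_atTop (max 0 s0)] with s hs
        have hspos : (0:ℝ) < s := lt_of_le_of_lt (le_max_left _ _) hs
        have hss0 : s0 < s := lt_of_le_of_lt (le_max_right _ _) hs
        rw [Real.div_rpow (by linarith) hspos.le, Real.rpow_sub hspos]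
        have h1 : (0:ℝ) < s ^ p := Real.rpow_pos_of_pos hspos p
        have h2 : (0:ℝ) < s ^ q := Real.rpow_pos_of_pos hspos q
        field_simp
      have := (hcore.congr' heq).const_mul A
      simpa using this
    have t4 : Tendsto (fun s : ℝ => (s - s0) ^ p / s ^ p) atTop (𝓝 1) := by
      have heq : ∀ᶠ s : ℝ in atTop, ((s - s0) / s) ^ p = (s - s0) ^ p / s ^ p := by
        filter_upwards [eventually_gt_atTop (max 0 s0)] with s hs
        have hspos : (0:ℝ) < s := lt_of_le_of_lt (le_max_left _ _) hs
        have hss0 : s0 < s := lt_of_le_of_lt (le_max_right _ _) hs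
        rw [Real.div_rpow (by linarith) hspos.le]
      exact (hpow p hp0).congr' heq
    have hsum : Tendsto (fun s : ℝ => f s0 * (s ^ p)⁻¹ + b * ((s - s0) / s ^ p)
        + A * ((s - s0) ^ q / s ^ p) + (s - s0) ^ p / s ^ p) atTop (𝓝 (0 + 0 + 0 + 1)) :=
      ((t1.add t2).add t3).add t4
    rw [show (0:ℝ) + 0 + 0 + 1 = 1 by ring] at hsum
    refine hsum.congr' ?_
    filter_upwards [eventually_gt_atTop (max 0 s0)] with s hs
    have hspos : (0:ℝ) < s := lt_of_le_of_lt (le_max_left _ _) hs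
    have hss0 : s0 < s := lt_of_le_of_lt (le_max_right _ _) hs
    rw [htail s hss0.le, hT]
    simp only
    have h1 : (0:ℝ) < s ^ p := Real.rpow_pos_of_pos hspos p
    field_simp
  exact ⟨ftil, hcont1, hmono, hagree, hlow, htend⟩
end
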